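/- arXiv:0911.1840 — 4 statements merged into one kernel-verified Lean document; each statement's English description precedes it below -/
import Mathlib

section
/- Entropic uncertainty principle for quantum pressures: let H be a complex Hilbert space, (π_k)_{k=1}^N and (τ_j)_{j=1}^M two partitions of identity on H, (V_k)_{k=1}^N and (W_j)_{j=1}^M families of positive real numbers, A := max_k V_k, B := max_j W_j. Let U be a linear isometry of H, (O_k)_{k=1}^N a family of bounded operators on H, δ' ≥ 0, and ψ ∈ H a vector of norm 1 such that ‖(Id − O_k)π_k ψ‖ ≤ δ' for every k. Then p_τ(Uψ) + p_π(ψ) ≥ −2·log( c_O(U) + N·A·B·δ' ), where c_O(U) := max_{j,k} ( V_k · W_j · ‖τ_j U π_k^* O_k‖ ). -/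
open Complex ContinuousLinearMap Finset

local notation "⟪" x ", " y "⟫" => @inner ℂ _ _ x y

section helpers
variable {H : Type*} [NormedAddCommGroup H] [InnerProductSpace ℂ H] [CompleteSpace H]

lemma eup_sum_inner {N : ℕ} (π : Fin N → H →L[ℂ] H)
    (hπ : ∑ k : Fin N, ContinuousLinearMap.adjoint (π k) * π k = 1) (a b : H) :
    ∑ k : Fin N, ⟪π k a, π k b⟫ = ⟪a, b⟫ := by
  have h : ⟪a, (∑ k : Fin N, ContinuousLinearMap.adjoint (π k) * π k) b⟫ = ⟪a, b⟫ := by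
    rw [hπ]; simp
  rw [← h, ContinuousLinearMap.sum_apply, inner_sum]
  refine Finset.sum_congr rfl fun k _ => ?_
  rw [ContinuousLinearMap.mul_apply, ContinuousLinearMap.adjoint_inner_right]

lemma eup_sum_normsq {N : ℕ} (π : Fin N → H →L[ℂ] H)
    (hπ : ∑ k : Fin N, ContinuousLinearMap.adjoint (π k) * π k = 1) (a : H) :
    ∑ k : Fin N, ‖π k a‖ ^ 2 = ‖a‖ ^ 2 := by
  have h := eup_sum_inner π hπ a a
  simp only [inner_self_eq_norm_sq_to_K] at h
  exact_mod_cast h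

lemma eup_norm_apply_le {N : ℕ} (π : Fin N → H →L[ℂ] H)
    (hπ : ∑ k : Fin N, ContinuousLinearMap.adjoint (π k) * π k = 1) (k : Fin N) (a : H) :
    ‖π k a‖ ≤ ‖a‖ := by
  have h := eup_sum_normsq π hπ a
  have h2 : ‖π k a‖ ^ 2 ≤ ‖a‖ ^ 2 := by
    rw [← h]
    exact Finset.single_le_sum (fun i _ => sq_nonneg ‖π i a‖) (Finset.mem_univ k)
  nlinarith [norm_nonneg (π k a), norm_nonneg a]

lemma eup_deriv_nonneg (g : ℝ → ℝ) (d : ℝ) (hg : HasDerivAt g d 0) (h0 : g 0 = 0)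
    (hge : ∀ t ∈ Set.Ioc (0:ℝ) 1, 0 ≤ g t) : 0 ≤ d := by
  have h1 : HasDerivWithinAt g d (Set.Ioi 0) 0 := hg.hasDerivWithinAt
  rw [hasDerivWithinAt_iff_tendsto_slope] at h1
  have hs : Set.Ioi (0:ℝ) \ {0} = Set.Ioi 0 := Set.diff_singleton_eq_self (by simp)
  rw [hs] at h1
  refine ge_of_tendsto h1 ?_
  filter_upwards [Ioc_mem_nhdsGT one_pos] with t ht
  rw [slope_def_field, h0]
  have ht0 : (0:ℝ) < t := ht.1
  have h2 := hge t ht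
  have h3 : (0:ℝ) ≤ g t - 0 := by linarith
  exact div_nonneg h3 (by linarith)

omit [CompleteSpace H] in
lemma eup_inner_map (U : H →L[ℂ] H) (hU : ∀ x : H, ‖U x‖ = ‖x‖) (a b : H) :
    ⟪U a, U b⟫ = ⟪a, b⟫ :=
  LinearIsometry.inner_map_map ⟨U.toLinearMap, hU⟩ a b

end helpers

set_option maxHeartbeats 1600000

/-- **Entropic uncertainty principle for quantum pressures** (Anantharaman–Nonnenmacher,
Theorem 6.5). Let `H` be a complex Hilbert space, `(π_k)_{k=1}^N` and `(τ_j)_{j=1}^M`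
partitions of identity on `H`, `(V_k)` and `(W_j)` families of positive weights,
`A := max_k V_k`, `B := max_j W_j`. Let `U` be a linear isometry of `H`, `(O_k)` a family
of bounded operators, `δ' ≥ 0`, and `ψ` a unit vector with `‖(Id − O_k) π_k ψ‖ ≤ δ'` for
all `k`. Then `p_τ(Uψ) + p_π(ψ) ≥ −2 log (c_O(U) + N·A·B·δ')` where
`c_O(U) = max_{j,k} (V_k · W_j · ‖τ_j U π_k^* O_k‖)` and
`p_π(ψ) = −∑_k ‖π_k ψ‖² log ‖π_k ψ‖² − 2 ∑_k ‖π_k ψ‖² log V_k` (similarly for `p_τ`). -/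
theorem entropic_uncertainty_principle_for_quantum_pressures
    {H : Type*} [NormedAddCommGroup H] [InnerProductSpace ℂ H] [CompleteSpace H]
    {N M : ℕ} (hN : 0 < N) (hM : 0 < M)
    (π : Fin N → H →L[ℂ] H) (τ : Fin M → H →L[ℂ] H)
    (hπ : ∑ k : Fin N, ContinuousLinearMap.adjoint (π k) * π k = 1)
    (hτ : ∑ j : Fin M, ContinuousLinearMap.adjoint (τ j) * τ j = 1)
    (V : Fin N → ℝ) (W : Fin M → ℝ) (hV : ∀ k, 0 < V k) (hW : ∀ j, 0 < W j)
    (U : H →L[ℂ] H) (hU : ∀ x : H, ‖U x‖ = ‖x‖)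
    (O : Fin N → H →L[ℂ] H) (δ' : ℝ) (hδ' : 0 ≤ δ')
    (ψ : H) (hψ : ‖ψ‖ = 1)
    (hO : ∀ k : Fin N, ‖π k ψ - O k (π k ψ)‖ ≤ δ') :
    (-(∑ j : Fin M, ‖τ j (U ψ)‖ ^ 2 * Real.log (‖τ j (U ψ)‖ ^ 2))
        - 2 * ∑ j : Fin M, ‖τ j (U ψ)‖ ^ 2 * Real.log (W j))
      + (-(∑ k : Fin N, ‖π k ψ‖ ^ 2 * Real.log (‖π k ψ‖ ^ 2))
        - 2 * ∑ k : Fin N, ‖π k ψ‖ ^ 2 * Real.log (V k))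
      ≥ -2 * Real.log
          ((Finset.univ.sup'
              (Finset.univ_nonempty_iff.mpr ⟨(⟨0, hM⟩, ⟨0, hN⟩)⟩)
              (fun jk : Fin M × Fin N =>
                V jk.2 * W jk.1 *
                  ‖τ jk.1 * U * ContinuousLinearMap.adjoint (π jk.2) * O jk.2‖))
            + (N : ℝ)
              * (Finset.univ.sup' (Finset.univ_nonempty_iff.mpr ⟨⟨0, hN⟩⟩) V)
              * (Finset.univ.sup' (Finset.univ_nonempty_iff.mpr ⟨⟨0, hM⟩⟩) W)
              * δ') := by
  classical
  set sc : ℝ := Finset.univ.sup'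
      (Finset.univ_nonempty_iff.mpr ⟨(⟨0, hM⟩, ⟨0, hN⟩)⟩)
      (fun jk : Fin M × Fin N =>
        V jk.2 * W jk.1 * ‖τ jk.1 * U * ContinuousLinearMap.adjoint (π jk.2) * O jk.2‖)
    with hsc
  set sA : ℝ := Finset.univ.sup' (Finset.univ_nonempty_iff.mpr ⟨⟨0, hN⟩⟩) V with hsA
  set sB : ℝ := Finset.univ.sup' (Finset.univ_nonempty_iff.mpr ⟨⟨0, hM⟩⟩) W with hsB
  set CC : ℝ := sc + (N:ℝ) * sA * sB * δ' with hCCdef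
  -- facts about the constants
  have hsc_ge : ∀ (j : Fin M) (k : Fin N),
      V k * W j * ‖τ j * U * ContinuousLinearMap.adjoint (π k) * O k‖ ≤ sc := by
    intro j k
    rw [hsc]
    exact Finset.le_sup' (fun jk : Fin M × Fin N =>
      V jk.2 * W jk.1 * ‖τ jk.1 * U * ContinuousLinearMap.adjoint (π jk.2) * O jk.2‖)
      (Finset.mem_univ ((j, k) : Fin M × Fin N))
  have hsA_ge : ∀ k, V k ≤ sA := by
    intro k; rw [hsA]; exact Finset.le_sup' V (Finset.mem_univ k)
  have hsB_ge : ∀ j, W j ≤ sB := by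
    intro j; rw [hsB]; exact Finset.le_sup' W (Finset.mem_univ j)
  have hsA_pos : 0 < sA := lt_of_lt_of_le (hV ⟨0, hN⟩) (hsA_ge ⟨0, hN⟩)
  have hsB_pos : 0 < sB := lt_of_lt_of_le (hW ⟨0, hM⟩) (hsB_ge ⟨0, hM⟩)
  have hsc_nn : 0 ≤ sc :=
    le_trans (mul_nonneg (mul_nonneg (hV _).le (hW _).le) (norm_nonneg _))
      (hsc_ge ⟨0, hM⟩ ⟨0, hN⟩)
  have hCC_nn : 0 ≤ CC := by
    rw [hCCdef]
    have h1 : 0 ≤ (N:ℝ) * sA * sB * δ' := by positivity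
    linarith
  -- analytic setup
  set e : Fin M × Fin N → ℂ := fun jk =>
    ⟪τ jk.1 (U ψ), τ jk.1 (U (ContinuousLinearMap.adjoint (π jk.2) (π jk.2 ψ)))⟫ with he
  set Ar : Fin M × Fin N → ℝ := fun jk =>
    (W jk.1 ^ 2 * ‖τ jk.1 (U ψ)‖ ^ 2) * (V jk.2 ^ 2 * ‖π jk.2 ψ‖ ^ 2) with hAr
  set dd : Fin M × Fin N → ℝ := fun jk => Real.log (Ar jk) / 2 with hdd
  set G : ℂ → ℂ := fun z =>
    ∑ jk : Fin M × Fin N, e jk * Complex.exp (z * ((dd jk : ℝ) : ℂ)) with hG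
  have hτs := eup_sum_inner τ hτ
  have hπs := eup_sum_inner π hπ
  have hUi := eup_inner_map U hU
  have hUψ : ‖U ψ‖ = 1 := by rw [hU, hψ]
  have hPsum : ∑ j : Fin M, ‖τ j (U ψ)‖ ^ 2 = 1 := by
    rw [eup_sum_normsq τ hτ (U ψ), hUψ]; norm_num
  have hQsum : ∑ k : Fin N, ‖π k ψ‖ ^ 2 = 1 := by
    rw [eup_sum_normsq π hπ ψ, hψ]; norm_num
  have hτle : ∀ (j : Fin M) (v : H), ‖τ j v‖ ≤ ‖v‖ := fun j v => eup_norm_apply_le τ hτ j v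
  have hπle : ∀ (k : Fin N) (v : H), ‖π k v‖ ≤ ‖v‖ := fun k v => eup_norm_apply_le π hπ k v
  have hQle1 : ∀ k, ‖π k ψ‖ ≤ 1 := fun k => le_trans (hπle k ψ) (le_of_eq hψ)
  have hψeq : ∑ k : Fin N, ContinuousLinearMap.adjoint (π k) (π k ψ) = ψ := by
    have h := congrArg (fun T : H →L[ℂ] H => T ψ) hπ
    simpa [ContinuousLinearMap.sum_apply, ContinuousLinearMap.mul_apply] using h
  have hrow : ∀ j : Fin M, ∑ k : Fin N, e (j, k) = ((‖τ j (U ψ)‖ ^ 2 : ℝ) : ℂ) := by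
    intro j
    simp only [he]
    calc ∑ k : Fin N, ⟪τ j (U ψ), τ j (U (ContinuousLinearMap.adjoint (π k) (π k ψ)))⟫
        = ⟪τ j (U ψ), ∑ k : Fin N, τ j (U (ContinuousLinearMap.adjoint (π k) (π k ψ)))⟫ := by
          rw [inner_sum]
      _ = ⟪τ j (U ψ), τ j (U ψ)⟫ := by rw [← map_sum, ← map_sum, hψeq]
      _ = ((‖τ j (U ψ)‖ ^ 2 : ℝ) : ℂ) := by rw [inner_self_eq_norm_sq_to_K]; norm_cast
  have hcol : ∀ k : Fin N, ∑ j : Fin M, e (j, k) = ((‖π k ψ‖ ^ 2 : ℝ) : ℂ) := by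
    intro k
    simp only [he]
    calc ∑ j : Fin M, ⟪τ j (U ψ), τ j (U (ContinuousLinearMap.adjoint (π k) (π k ψ)))⟫
        = ⟪U ψ, U (ContinuousLinearMap.adjoint (π k) (π k ψ))⟫ := hτs _ _
      _ = ⟪ψ, ContinuousLinearMap.adjoint (π k) (π k ψ)⟫ := hUi _ _
      _ = ⟪π k ψ, π k ψ⟫ := ContinuousLinearMap.adjoint_inner_right _ _ _
      _ = ((‖π k ψ‖ ^ 2 : ℝ) : ℂ) := by rw [inner_self_eq_norm_sq_to_K]; norm_cast
  have htot : ∑ jk : Fin M × Fin N, e jk = 1 := by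
    calc ∑ jk : Fin M × Fin N, e jk = ∑ j : Fin M, ∑ k : Fin N, e (j, k) :=
          Fintype.sum_prod_type _
      _ = ∑ j : Fin M, ((‖τ j (U ψ)‖ ^ 2 : ℝ) : ℂ) :=
          Finset.sum_congr rfl fun j _ => hrow j
      _ = 1 := by rw [← Complex.ofReal_sum, hPsum, Complex.ofReal_one]
  have hevanish : ∀ jk : Fin M × Fin N,
      ‖τ jk.1 (U ψ)‖ ^ 2 * ‖π jk.2 ψ‖ ^ 2 = 0 → e jk = 0 := by
    rintro ⟨j, k⟩ hpq
    rcases mul_eq_zero.mp hpq with h | h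
    · have hy : τ j (U ψ) = 0 := by
        rw [← norm_eq_zero]; nlinarith [norm_nonneg (τ j (U ψ))]
      simp [he, hy]
    · have hx : π k ψ = 0 := by
        rw [← norm_eq_zero]; nlinarith [norm_nonneg (π k ψ)]
      simp [he, hx]
  have hcontr : ∀ ν : Fin N → ℂ, (∀ k, ‖ν k‖ ≤ 1) →
      ‖∑ k : Fin N, ν k • ContinuousLinearMap.adjoint (π k) (π k ψ)‖ ≤ 1 := by
    intro ν hν
    set v : H := ∑ k : Fin N, ν k • ContinuousLinearMap.adjoint (π k) (π k ψ) with hv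
    have h2 : ⟪v, v⟫ = ∑ k : Fin N, ν k * ⟪π k v, π k ψ⟫ := by
      conv_lhs => rw [hv]
      rw [inner_sum]
      refine Finset.sum_congr rfl fun k _ => ?_
      rw [inner_smul_right, ContinuousLinearMap.adjoint_inner_right]
    have h1 : (‖v‖ ^ 2 : ℝ) = ‖⟪v, v⟫‖ := by
      rw [inner_self_eq_norm_sq_to_K]
      rw [norm_pow]
      simp
    have h3 : ‖⟪v, v⟫‖ ≤ ∑ k : Fin N, ‖π k v‖ * ‖π k ψ‖ := by
      rw [h2]
      refine (norm_sum_le _ _).trans (Finset.sum_le_sum fun k _ => ?_)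
      rw [norm_mul]
      calc ‖ν k‖ * ‖⟪π k v, π k ψ⟫‖ ≤ 1 * (‖π k v‖ * ‖π k ψ‖) :=
            mul_le_mul (hν k) (norm_inner_le_norm _ _) (norm_nonneg _) zero_le_one
        _ = ‖π k v‖ * ‖π k ψ‖ := one_mul _
    have h4 : ∑ k : Fin N, ‖π k v‖ * ‖π k ψ‖ ≤ ‖v‖ := by
      have h5 := Real.sum_mul_le_sqrt_mul_sqrt Finset.univ
        (fun k : Fin N => ‖π k v‖) (fun k : Fin N => ‖π k ψ‖)
      rw [eup_sum_normsq π hπ v, eup_sum_normsq π hπ ψ, hψ] at h5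
      simpa [Real.sqrt_sq (norm_nonneg v)] using h5
    nlinarith [norm_nonneg v]
  have hedge0 : ∀ z : ℂ, z.re = 0 → ‖G z‖ ≤ 1 := by
    intro z hz
    set μ : Fin M → ℂ := fun j =>
      Complex.exp (z * ((Real.log (W j ^ 2 * ‖τ j (U ψ)‖ ^ 2) / 2 : ℝ) : ℂ)) with hμ
    set ν : Fin N → ℂ := fun k =>
      Complex.exp (z * ((Real.log (V k ^ 2 * ‖π k ψ‖ ^ 2) / 2 : ℝ) : ℂ)) with hν
    have hnorm_exp : ∀ r : ℝ, ‖Complex.exp (z * (r : ℂ))‖ = 1 := by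
      intro r
      rw [Complex.norm_exp]
      simp [Complex.mul_re, hz]
    have hμ1 : ∀ j, ‖μ j‖ = 1 := fun j => hnorm_exp _
    have hν1 : ∀ k, ‖ν k‖ = 1 := fun k => hnorm_exp _
    set w : H := ∑ k : Fin N, ν k • ContinuousLinearMap.adjoint (π k) (π k ψ) with hw
    have hterm : ∀ jk : Fin M × Fin N,
        e jk * Complex.exp (z * ((dd jk : ℝ) : ℂ)) = μ jk.1 * (ν jk.2 * e jk) := by
      rintro ⟨j, k⟩
      by_cases hpq : ‖τ j (U ψ)‖ ^ 2 * ‖π k ψ‖ ^ 2 = 0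
      · rw [hevanish (j, k) hpq]; ring
      · have hp : ‖τ j (U ψ)‖ ^ 2 ≠ 0 := fun h => hpq (by rw [h]; ring)
        have hq : ‖π k ψ‖ ^ 2 ≠ 0 := fun h => hpq (by rw [h]; ring)
        have hWp : W j ^ 2 * ‖τ j (U ψ)‖ ^ 2 ≠ 0 :=
          mul_ne_zero (pow_ne_zero 2 (hW j).ne') hp
        have hVq : V k ^ 2 * ‖π k ψ‖ ^ 2 ≠ 0 :=
          mul_ne_zero (pow_ne_zero 2 (hV k).ne') hq
        have hlog : dd (j, k) = Real.log (W j ^ 2 * ‖τ j (U ψ)‖ ^ 2) / 2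
            + Real.log (V k ^ 2 * ‖π k ψ‖ ^ 2) / 2 := by
          simp only [hdd, hAr]
          rw [Real.log_mul hWp hVq]
          ring
        rw [hlog, hμ, hν]
        push_cast
        rw [mul_add, Complex.exp_add]
        ring
    have hGz : G z = ∑ j : Fin M, μ j * ⟪τ j (U ψ), τ j (U w)⟫ := by
      calc G z = ∑ jk : Fin M × Fin N, μ jk.1 * (ν jk.2 * e jk) := by
            simp only [hG]
            exact Finset.sum_congr rfl fun jk _ => hterm jk
        _ = ∑ j : Fin M, ∑ k : Fin N, μ j * (ν k * e (j, k)) := Fintype.sum_prod_type _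
        _ = ∑ j : Fin M, μ j * ⟪τ j (U ψ), τ j (U w)⟫ := by
            refine Finset.sum_congr rfl fun j _ => ?_
            rw [← Finset.mul_sum]
            congr 1
            rw [hw, map_sum, map_sum, inner_sum]
            refine Finset.sum_congr rfl fun k _ => ?_
            rw [map_smul, map_smul, inner_smul_right]
    have hwle : ‖w‖ ≤ 1 := hcontr ν fun k => le_of_eq (hν1 k)
    have hτw : ∑ j : Fin M, ‖τ j (U w)‖ ^ 2 = ‖w‖ ^ 2 := by
      rw [eup_sum_normsq τ hτ (U w), hU]
    calc ‖G z‖ = ‖∑ j : Fin M, μ j * ⟪τ j (U ψ), τ j (U w)⟫‖ := by rw [hGz]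
      _ ≤ ∑ j : Fin M, ‖μ j * ⟪τ j (U ψ), τ j (U w)⟫‖ := norm_sum_le _ _
      _ ≤ ∑ j : Fin M, ‖τ j (U ψ)‖ * ‖τ j (U w)‖ := Finset.sum_le_sum fun j _ => by
            rw [norm_mul, hμ1 j, one_mul]
            exact norm_inner_le_norm _ _
      _ ≤ Real.sqrt (∑ j : Fin M, ‖τ j (U ψ)‖ ^ 2)
            * Real.sqrt (∑ j : Fin M, ‖τ j (U w)‖ ^ 2) :=
          Real.sum_mul_le_sqrt_mul_sqrt _ _ _
      _ ≤ 1 := by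
            rw [hPsum, hτw, Real.sqrt_one, one_mul, Real.sqrt_sq (norm_nonneg w)]
            exact hwle
  have hπop : ∀ k, ‖π k‖ ≤ 1 :=
    fun k => ContinuousLinearMap.opNorm_le_bound _ zero_le_one
      (fun u => by rw [one_mul]; exact hπle k u)
  have hadjle : ∀ (k : Fin N) (v : H), ‖ContinuousLinearMap.adjoint (π k) v‖ ≤ ‖v‖ := by
    intro k v
    have h1 : ‖(ContinuousLinearMap.adjoint (π k) : H →L[ℂ] H)‖ = ‖π k‖ :=
      LinearIsometryEquiv.norm_map ContinuousLinearMap.adjoint (π k)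
    calc ‖ContinuousLinearMap.adjoint (π k) v‖
        ≤ ‖(ContinuousLinearMap.adjoint (π k) : H →L[ℂ] H)‖ * ‖v‖ :=
          ContinuousLinearMap.le_opNorm _ v
      _ ≤ 1 * ‖v‖ := by
          rw [h1]; exact mul_le_mul_of_nonneg_right (hπop k) (norm_nonneg v)
      _ = ‖v‖ := one_mul _
  have hesplit : ∀ (j : Fin M) (k : Fin N),
      ‖e (j, k)‖ ≤ ‖τ j (U ψ)‖
          * ‖τ j * U * ContinuousLinearMap.adjoint (π k) * O k‖ * ‖π k ψ‖
        + ‖τ j (U ψ)‖ * δ' := by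
    intro j k
    have hdec : τ j (U (ContinuousLinearMap.adjoint (π k) (π k ψ)))
        = (τ j * U * ContinuousLinearMap.adjoint (π k) * O k) (π k ψ)
          + τ j (U (ContinuousLinearMap.adjoint (π k) (π k ψ - O k (π k ψ)))) := by
      have hadd : O k (π k ψ) + (π k ψ - O k (π k ψ)) = π k ψ := by abel
      simp only [ContinuousLinearMap.mul_apply, ← map_add, hadd]
    have hB : ‖τ j (U (ContinuousLinearMap.adjoint (π k) (π k ψ - O k (π k ψ))))‖ ≤ δ' :=
      le_trans (hτle _ _) (by rw [hU]; exact le_trans (hadjle k _) (hO k))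
    have hA : ‖(τ j * U * ContinuousLinearMap.adjoint (π k) * O k) (π k ψ)‖
        ≤ ‖τ j * U * ContinuousLinearMap.adjoint (π k) * O k‖ * ‖π k ψ‖ :=
      ContinuousLinearMap.le_opNorm _ _
    calc ‖e (j, k)‖
        = ‖⟪τ j (U ψ), (τ j * U * ContinuousLinearMap.adjoint (π k) * O k) (π k ψ)⟫
            + ⟪τ j (U ψ), τ j (U (ContinuousLinearMap.adjoint (π k)
                (π k ψ - O k (π k ψ))))⟫‖ := by
          simp only [he]
          rw [hdec, inner_add_right]
      _ ≤ ‖⟪τ j (U ψ), (τ j * U * ContinuousLinearMap.adjoint (π k) * O k) (π k ψ)⟫‖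
            + ‖⟪τ j (U ψ), τ j (U (ContinuousLinearMap.adjoint (π k)
                (π k ψ - O k (π k ψ))))⟫‖ := norm_add_le _ _
      _ ≤ ‖τ j (U ψ)‖ * ‖(τ j * U * ContinuousLinearMap.adjoint (π k) * O k) (π k ψ)‖
            + ‖τ j (U ψ)‖ * ‖τ j (U (ContinuousLinearMap.adjoint (π k)
                (π k ψ - O k (π k ψ))))‖ :=
          add_le_add (norm_inner_le_norm _ _) (norm_inner_le_norm _ _)
      _ ≤ ‖τ j (U ψ)‖ * (‖τ j * U * ContinuousLinearMap.adjoint (π k) * O k‖ * ‖π k ψ‖)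
            + ‖τ j (U ψ)‖ * δ' :=
          add_le_add (mul_le_mul_of_nonneg_left hA (norm_nonneg _))
            (mul_le_mul_of_nonneg_left hB (norm_nonneg _))
      _ = ‖τ j (U ψ)‖ * ‖τ j * U * ContinuousLinearMap.adjoint (π k) * O k‖ * ‖π k ψ‖
            + ‖τ j (U ψ)‖ * δ' := by ring
  have hedge1 : ∀ z : ℂ, z.re = 1 → ‖G z‖ ≤ CC := by
    intro z hz
    have hperjk : ∀ jk : Fin M × Fin N,
        ‖e jk * Complex.exp (z * ((dd jk : ℝ) : ℂ))‖
          ≤ sc * (‖τ jk.1 (U ψ)‖ ^ 2 * ‖π jk.2 ψ‖ ^ 2)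
            + sA * sB * δ' * ‖τ jk.1 (U ψ)‖ ^ 2 := by
      rintro ⟨j, k⟩
      have hre : ‖Complex.exp (z * ((dd (j, k) : ℝ) : ℂ))‖ = Real.exp (dd (j, k)) := by
        rw [Complex.norm_exp]
        simp [Complex.mul_re, hz]
      rw [norm_mul, hre]
      have hrhs1 : 0 ≤ sA * sB * δ' * ‖τ j (U ψ)‖ ^ 2 :=
        mul_nonneg (mul_nonneg (mul_nonneg hsA_pos.le hsB_pos.le) hδ') (sq_nonneg _)
      by_cases hpq : ‖τ j (U ψ)‖ ^ 2 * ‖π k ψ‖ ^ 2 = 0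
      · rw [hevanish (j, k) hpq, norm_zero, zero_mul]
        have hrhs0 : 0 ≤ sc * (‖τ j (U ψ)‖ ^ 2 * ‖π k ψ‖ ^ 2) :=
          mul_nonneg hsc_nn (by positivity)
        linarith
      · have hpne : ‖τ j (U ψ)‖ ^ 2 ≠ 0 := fun h => hpq (by rw [h, zero_mul])
        have hqne : ‖π k ψ‖ ^ 2 ≠ 0 := fun h => hpq (by rw [h, mul_zero])
        have hp : 0 < ‖τ j (U ψ)‖ ^ 2 := lt_of_le_of_ne (sq_nonneg _) (Ne.symm hpne)
        have hq : 0 < ‖π k ψ‖ ^ 2 := lt_of_le_of_ne (sq_nonneg _) (Ne.symm hqne)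
        have hArpos : 0 < Ar (j, k) := by
          simp only [hAr]
          exact mul_pos (mul_pos (pow_pos (hW j) 2) hp)
            (mul_pos (pow_pos (hV k) 2) hq)
        have hArsq : Ar (j, k)
            = ((W j * ‖τ j (U ψ)‖) * (V k * ‖π k ψ‖)) ^ 2 := by
          simp only [hAr]; ring
        have hexp : Real.exp (dd (j, k)) = (W j * ‖τ j (U ψ)‖) * (V k * ‖π k ψ‖) := by
          have h1 : dd (j, k) = Real.log (Real.sqrt (Ar (j, k))) := by
            simp only [hdd]
            rw [Real.log_sqrt hArpos.le]
          rw [h1, Real.exp_log (Real.sqrt_pos.mpr hArpos), hArsq,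
            Real.sqrt_sq (mul_nonneg (mul_nonneg (hW j).le (norm_nonneg _))
              (mul_nonneg (hV k).le (norm_nonneg _)))]
        rw [hexp]
        calc ‖e (j, k)‖ * ((W j * ‖τ j (U ψ)‖) * (V k * ‖π k ψ‖))
            ≤ (‖τ j (U ψ)‖
                * ‖τ j * U * ContinuousLinearMap.adjoint (π k) * O k‖ * ‖π k ψ‖
                + ‖τ j (U ψ)‖ * δ')
              * ((W j * ‖τ j (U ψ)‖) * (V k * ‖π k ψ‖)) := by
              refine mul_le_mul_of_nonneg_right (hesplit j k)
                (mul_nonneg (mul_nonneg (hW j).le (norm_nonneg _))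
                  (mul_nonneg (hV k).le (norm_nonneg _)))
          _ = (V k * W j * ‖τ j * U * ContinuousLinearMap.adjoint (π k) * O k‖)
                * (‖τ j (U ψ)‖ ^ 2 * ‖π k ψ‖ ^ 2)
              + (W j * V k * ‖π k ψ‖) * δ' * ‖τ j (U ψ)‖ ^ 2 := by ring
          _ ≤ sc * (‖τ j (U ψ)‖ ^ 2 * ‖π k ψ‖ ^ 2)
              + sA * sB * δ' * ‖τ j (U ψ)‖ ^ 2 := by
              refine add_le_add
                (mul_le_mul_of_nonneg_right (hsc_ge j k) (by positivity))
                (mul_le_mul_of_nonneg_right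
                  (mul_le_mul_of_nonneg_right ?_ hδ') (sq_nonneg _))
              calc W j * V k * ‖π k ψ‖ ≤ W j * V k * 1 :=
                    mul_le_mul_of_nonneg_left (hQle1 k)
                      (mul_nonneg (hW j).le (hV k).le)
                _ = W j * V k := mul_one _
                _ ≤ sB * sA := mul_le_mul (hsB_ge j) (hsA_ge k) (hV k).le hsB_pos.le
                _ = sA * sB := mul_comm _ _
    have hsum1 : ∑ jk : Fin M × Fin N, ‖τ jk.1 (U ψ)‖ ^ 2 * ‖π jk.2 ψ‖ ^ 2 = 1 := by
      rw [Fintype.sum_prod_type]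
      calc ∑ j : Fin M, ∑ k : Fin N, ‖τ j (U ψ)‖ ^ 2 * ‖π k ψ‖ ^ 2
          = ∑ j : Fin M, ‖τ j (U ψ)‖ ^ 2 * ∑ k : Fin N, ‖π k ψ‖ ^ 2 := by
            refine Finset.sum_congr rfl fun j _ => ?_
            rw [Finset.mul_sum]
        _ = 1 := by rw [hQsum]; simp [hPsum]
    have hsum2 : ∑ jk : Fin M × Fin N, ‖τ jk.1 (U ψ)‖ ^ 2 = (N : ℝ) := by
      rw [Fintype.sum_prod_type]
      calc ∑ j : Fin M, ∑ _k : Fin N, ‖τ j (U ψ)‖ ^ 2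
          = ∑ j : Fin M, (N : ℝ) * ‖τ j (U ψ)‖ ^ 2 := by
            refine Finset.sum_congr rfl fun j _ => ?_
            rw [Finset.sum_const, Finset.card_univ, Fintype.card_fin, nsmul_eq_mul]
        _ = (N : ℝ) := by rw [← Finset.mul_sum, hPsum, mul_one]
    calc ‖G z‖ ≤ ∑ jk : Fin M × Fin N, ‖e jk * Complex.exp (z * ((dd jk : ℝ) : ℂ))‖ := by
          simp only [hG]
          exact norm_sum_le _ _
      _ ≤ ∑ jk : Fin M × Fin N, (sc * (‖τ jk.1 (U ψ)‖ ^ 2 * ‖π jk.2 ψ‖ ^ 2)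
            + sA * sB * δ' * ‖τ jk.1 (U ψ)‖ ^ 2) :=
          Finset.sum_le_sum fun jk _ => hperjk jk
      _ = sc * (∑ jk : Fin M × Fin N, ‖τ jk.1 (U ψ)‖ ^ 2 * ‖π jk.2 ψ‖ ^ 2)
            + sA * sB * δ' * ∑ jk : Fin M × Fin N, ‖τ jk.1 (U ψ)‖ ^ 2 := by
          rw [Finset.sum_add_distrib, Finset.mul_sum, Finset.mul_sum]
      _ = CC := by
          rw [hsum1, hsum2, hCCdef]; ring
  have hGdiff : Differentiable ℂ G := by
    rw [hG]
    refine Differentiable.fun_sum fun jk _ => ?_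
    exact (differentiable_id.mul_const _).cexp.const_mul _
  have hGbdd : BddAbove ((norm ∘ G) ''
      (Complex.HadamardThreeLines.verticalClosedStrip 0 1)) := by
    refine ⟨∑ jk : Fin M × Fin N, ‖e jk‖ * Real.exp |dd jk|, ?_⟩
    rintro r ⟨z, hz, rfl⟩
    simp only [Function.comp_apply]
    calc ‖G z‖ ≤ ∑ jk : Fin M × Fin N, ‖e jk * Complex.exp (z * ((dd jk : ℝ) : ℂ))‖ := by
          simp only [hG]
          exact norm_sum_le _ _
      _ ≤ ∑ jk : Fin M × Fin N, ‖e jk‖ * Real.exp |dd jk| := by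
          refine Finset.sum_le_sum fun jk _ => ?_
          rw [norm_mul]
          refine mul_le_mul_of_nonneg_left ?_ (norm_nonneg _)
          rw [Complex.norm_exp]
          have hre : (z * ((dd jk : ℝ) : ℂ)).re = z.re * dd jk := by
            simp [Complex.mul_re]
          rw [hre]
          apply Real.exp_le_exp.mpr
          have h0 : 0 ≤ z.re := hz.1
          have h1 : z.re ≤ 1 := hz.2
          rcases le_or_gt 0 (dd jk) with h | h
          · calc z.re * dd jk ≤ 1 * dd jk := mul_le_mul_of_nonneg_right h1 h
              _ = dd jk := one_mul _
              _ ≤ |dd jk| := le_abs_self _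
          · calc z.re * dd jk ≤ 0 := mul_nonpos_of_nonneg_of_nonpos h0 h.le
              _ ≤ |dd jk| := abs_nonneg _
  have hhad : ∀ t : ℝ, t ∈ Set.Icc (0:ℝ) 1 → ‖G ((t:ℝ):ℂ)‖ ≤ CC ^ t := by
    intro t ht
    have hmem : ((t:ℝ):ℂ) ∈ Complex.HadamardThreeLines.verticalClosedStrip 0 1 := by
      simp only [Complex.HadamardThreeLines.verticalClosedStrip, Set.mem_preimage,
        Complex.ofReal_re]
      exact ht
    have h := Complex.HadamardThreeLines.norm_le_interp_of_mem_verticalClosedStrip' (f := G) zero_lt_one hmem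
      (hGdiff.diffContOnCl) hGbdd
      (fun w hw => hedge0 w (by simpa using hw))
      (fun w hw => hedge1 w (by simpa using hw))
    rw [Complex.ofReal_re] at h
    simp only [sub_zero, div_one] at h
    calc ‖G ((t:ℝ):ℂ)‖ ≤ 1 ^ (1 - t) * CC ^ t := h
      _ = CC ^ t := by rw [Real.one_rpow, one_mul]
  have hGre : ∀ t : ℝ, ∑ jk : Fin M × Fin N, (e jk).re * Real.exp (t * dd jk)
      = (G ((t:ℝ):ℂ)).re := by
    intro t
    simp only [hG]
    rw [Complex.re_sum]
    refine Finset.sum_congr rfl fun jk _ => ?_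
    have h1 : ((t:ℝ):ℂ) * ((dd jk : ℝ):ℂ) = ((t * dd jk : ℝ):ℂ) := by push_cast; ring
    rw [h1, ← Complex.ofReal_exp, Complex.mul_re]
    simp only [Complex.ofReal_re, Complex.ofReal_im, mul_zero, sub_zero]
  have hh0 : ∑ jk : Fin M × Fin N, (e jk).re = 1 := by
    rw [← Complex.re_sum, htot]
    simp
  have hDer : HasDerivAt (fun t : ℝ => ∑ jk : Fin M × Fin N, (e jk).re * Real.exp (t * dd jk))
      (∑ jk : Fin M × Fin N, (e jk).re * dd jk) 0 := by
    refine HasDerivAt.fun_sum fun jk _ => ?_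
    have h1 : HasDerivAt (fun t : ℝ => Real.exp (t * dd jk)) (dd jk) 0 := by
      have h2 : HasDerivAt (fun t : ℝ => t * dd jk) (dd jk) 0 := hasDerivAt_mul_const _
      simpa using h2.exp
    simpa using h1.const_mul ((e jk).re)
  have hCC_pos : 0 < CC := by
    rcases lt_or_eq_of_le hCC_nn with h | h
    · exact h
    · exfalso
      have hCC0 : CC = 0 := h.symm
      have hle : ∀ t ∈ Set.Ioc (0:ℝ) 1,
          (∑ jk : Fin M × Fin N, (e jk).re * Real.exp (t * dd jk)) ≤ 0 := by
        intro t ht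
        have h3 := hhad t ⟨ht.1.le, ht.2⟩
        rw [hCC0, Real.zero_rpow (ne_of_gt ht.1)] at h3
        rw [hGre t]
        calc (G ((t:ℝ):ℂ)).re ≤ ‖G ((t:ℝ):ℂ)‖ := by
              exact Complex.re_le_norm _
          _ ≤ 0 := h3
      have hf0 : (fun t : ℝ => ∑ jk : Fin M × Fin N, (e jk).re * Real.exp (t * dd jk)) 0
          = 1 := by
        simp only [zero_mul, Real.exp_zero, mul_one]
        exact hh0
      have hcont : Filter.Tendsto
          (fun t : ℝ => ∑ jk : Fin M × Fin N, (e jk).re * Real.exp (t * dd jk))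
          (nhdsWithin 0 (Set.Ioi 0)) (nhds 1) :=
        hf0 ▸ (hDer.continuousAt.continuousWithinAt (s := Set.Ioi (0:ℝ)))
      have h1le0 : (1:ℝ) ≤ 0 := le_of_tendsto hcont
        (by filter_upwards [Ioc_mem_nhdsGT one_pos] with t ht using hle t ht)
      linarith
  have hkey : ∑ jk : Fin M × Fin N, (e jk).re * dd jk ≤ Real.log CC := by
    have hg : HasDerivAt (fun t : ℝ => Real.exp (t * Real.log CC)
        - ∑ jk : Fin M × Fin N, (e jk).re * Real.exp (t * dd jk))
        (Real.log CC - ∑ jk : Fin M × Fin N, (e jk).re * dd jk) 0 := by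
      have h1 : HasDerivAt (fun t : ℝ => Real.exp (t * Real.log CC)) (Real.log CC) 0 := by
        have h2 : HasDerivAt (fun t : ℝ => t * Real.log CC) (Real.log CC) 0 :=
          hasDerivAt_mul_const _
        simpa using h2.exp
      exact h1.sub hDer
    have h0 : Real.exp ((0:ℝ) * Real.log CC)
        - (∑ jk : Fin M × Fin N, (e jk).re * Real.exp ((0:ℝ) * dd jk)) = 0 := by
      simp only [zero_mul, Real.exp_zero, mul_one]
      rw [hh0]; ring
    have hge : ∀ t ∈ Set.Ioc (0:ℝ) 1, 0 ≤ Real.exp (t * Real.log CC)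
        - ∑ jk : Fin M × Fin N, (e jk).re * Real.exp (t * dd jk) := by
      intro t ht
      have h3 := hhad t ⟨ht.1.le, ht.2⟩
      have h4 : (∑ jk : Fin M × Fin N, (e jk).re * Real.exp (t * dd jk)) ≤ CC ^ t := by
        rw [hGre t]
        calc (G ((t:ℝ):ℂ)).re ≤ ‖G ((t:ℝ):ℂ)‖ := by
              exact Complex.re_le_norm _
          _ ≤ CC ^ t := h3
      have h5 : CC ^ t = Real.exp (t * Real.log CC) := by
        rw [Real.rpow_def_of_pos hCC_pos, mul_comm]
      linarith
    have hfin := eup_deriv_nonneg _ _ hg h0 hge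
    linarith
  have hsplit : ∑ jk : Fin M × Fin N, (e jk).re * (2 * dd jk)
      = ∑ j : Fin M, ‖τ j (U ψ)‖ ^ 2 * Real.log (W j ^ 2 * ‖τ j (U ψ)‖ ^ 2)
        + ∑ k : Fin N, ‖π k ψ‖ ^ 2 * Real.log (V k ^ 2 * ‖π k ψ‖ ^ 2) := by
    have hterm : ∀ jk : Fin M × Fin N, (e jk).re * (2 * dd jk)
        = (e jk).re * Real.log (W jk.1 ^ 2 * ‖τ jk.1 (U ψ)‖ ^ 2)
          + (e jk).re * Real.log (V jk.2 ^ 2 * ‖π jk.2 ψ‖ ^ 2) := by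
      rintro ⟨j, k⟩
      by_cases hpq : ‖τ j (U ψ)‖ ^ 2 * ‖π k ψ‖ ^ 2 = 0
      · rw [hevanish (j, k) hpq]; simp
      · have hpne : ‖τ j (U ψ)‖ ^ 2 ≠ 0 := fun h => hpq (by rw [h, zero_mul])
        have hqne : ‖π k ψ‖ ^ 2 ≠ 0 := fun h => hpq (by rw [h, mul_zero])
        have hWp : W j ^ 2 * ‖τ j (U ψ)‖ ^ 2 ≠ 0 :=
          mul_ne_zero (pow_ne_zero 2 (hW j).ne') hpne
        have hVq : V k ^ 2 * ‖π k ψ‖ ^ 2 ≠ 0 :=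
          mul_ne_zero (pow_ne_zero 2 (hV k).ne') hqne
        have h2dd : 2 * dd (j, k) = Real.log (W j ^ 2 * ‖τ j (U ψ)‖ ^ 2)
            + Real.log (V k ^ 2 * ‖π k ψ‖ ^ 2) := by
          simp only [hdd, hAr]
          rw [Real.log_mul hWp hVq]
          ring
        rw [h2dd, mul_add]
    rw [Finset.sum_congr rfl fun jk _ => hterm jk, Finset.sum_add_distrib]
    congr 1
    · rw [Fintype.sum_prod_type]
      refine Finset.sum_congr rfl fun j _ => ?_
      dsimp only
      rw [← Finset.sum_mul]
      congr 1
      rw [← Complex.re_sum, hrow j, Complex.ofReal_re]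
    · rw [Fintype.sum_prod_type, Finset.sum_comm]
      refine Finset.sum_congr rfl fun k _ => ?_
      dsimp only
      rw [← Finset.sum_mul]
      congr 1
      rw [← Complex.re_sum, hcol k, Complex.ofReal_re]
  have hPexp : ∑ j : Fin M, ‖τ j (U ψ)‖ ^ 2 * Real.log (W j ^ 2 * ‖τ j (U ψ)‖ ^ 2)
      = ∑ j : Fin M, ‖τ j (U ψ)‖ ^ 2 * Real.log (‖τ j (U ψ)‖ ^ 2)
        + 2 * ∑ j : Fin M, ‖τ j (U ψ)‖ ^ 2 * Real.log (W j) := by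
    have hterm : ∀ j : Fin M, ‖τ j (U ψ)‖ ^ 2 * Real.log (W j ^ 2 * ‖τ j (U ψ)‖ ^ 2)
        = ‖τ j (U ψ)‖ ^ 2 * Real.log (‖τ j (U ψ)‖ ^ 2)
          + 2 * (‖τ j (U ψ)‖ ^ 2 * Real.log (W j)) := by
      intro j
      by_cases hp : ‖τ j (U ψ)‖ ^ 2 = 0
      · rw [hp]; ring
      · rw [Real.log_mul (pow_ne_zero 2 (hW j).ne') hp, Real.log_pow]
        push_cast
        ring
    rw [Finset.sum_congr rfl fun j _ => hterm j, Finset.sum_add_distrib, ← Finset.mul_sum]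
  have hQexp : ∑ k : Fin N, ‖π k ψ‖ ^ 2 * Real.log (V k ^ 2 * ‖π k ψ‖ ^ 2)
      = ∑ k : Fin N, ‖π k ψ‖ ^ 2 * Real.log (‖π k ψ‖ ^ 2)
        + 2 * ∑ k : Fin N, ‖π k ψ‖ ^ 2 * Real.log (V k) := by
    have hterm : ∀ k : Fin N, ‖π k ψ‖ ^ 2 * Real.log (V k ^ 2 * ‖π k ψ‖ ^ 2)
        = ‖π k ψ‖ ^ 2 * Real.log (‖π k ψ‖ ^ 2)
          + 2 * (‖π k ψ‖ ^ 2 * Real.log (V k)) := by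
      intro k
      by_cases hq : ‖π k ψ‖ ^ 2 = 0
      · rw [hq]; ring
      · rw [Real.log_mul (pow_ne_zero 2 (hV k).ne') hq, Real.log_pow]
        push_cast
        ring
    rw [Finset.sum_congr rfl fun k _ => hterm k, Finset.sum_add_distrib, ← Finset.mul_sum]
  have h2key : ∑ jk : Fin M × Fin N, (e jk).re * (2 * dd jk) ≤ 2 * Real.log CC := by
    have : ∑ jk : Fin M × Fin N, (e jk).re * (2 * dd jk)
        = 2 * ∑ jk : Fin M × Fin N, (e jk).re * dd jk := by
      rw [Finset.mul_sum]; exact Finset.sum_congr rfl fun jk _ => by ring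
    rw [this]; linarith
  rw [hsplit, hPexp, hQexp] at h2key
  linarith
end

section
/- Global solutions of the Riccati equation are bounded by the curvature bound: let K₀ ≥ 0 and let K : ℝ → ℝ be continuous with −K₀ ≤ K(t) ≤ 0 for all t ∈ ℝ. If U : ℝ → ℝ is differentiable and satisfies U'(t) + U(t)² + K(t) = 0 for all t ∈ ℝ, then |U(t)| ≤ √K₀ for all t ∈ ℝ. -/
/-- Auxiliary lemma: a global Riccati solution with curvature bounded below by `-K₀`
is bounded below by `-√K₀`. -/
lemma riccati_lower_aux
    (K₀ : ℝ) (hK₀ : 0 ≤ K₀) (K : ℝ → ℝ)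
    (hKbound : ∀ t : ℝ, -K₀ ≤ K t ∧ K t ≤ 0)
    (U : ℝ → ℝ) (hU : Differentiable ℝ U)
    (hRic : ∀ t : ℝ, deriv U t + (U t) ^ 2 + K t = 0) :
    ∀ t : ℝ, -Real.sqrt K₀ ≤ U t := by
  by_contra h
  push_neg at h
  obtain ⟨t₀, ht₀⟩ := h
  set a : ℝ := U t₀ with ha_def
  have ha : a < 0 := lt_of_lt_of_le ht₀ (neg_nonpos.mpr (Real.sqrt_nonneg K₀))
  have haK : K₀ < a ^ 2 := by
    have h1 : Real.sqrt K₀ < -a := by linarith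
    have h2 : Real.sqrt K₀ ^ 2 < (-a) ^ 2 :=
      pow_lt_pow_left₀ h1 (Real.sqrt_nonneg K₀) (by norm_num)
    rwa [Real.sq_sqrt hK₀, neg_pow, show (-1:ℝ)^2 * a^2 = a^2 by ring] at h2
  have hderivU : ∀ t, deriv U t = -(U t) ^ 2 - K t := fun t => by linarith [hRic t]
  -- Step 1: invariance: U t ≤ a for all t ≥ t₀
  have hInv : ∀ t ∈ Set.Ici t₀, U t ≤ a := by
    by_contra hc
    push_neg at hc
    obtain ⟨t₁, ht₁, hUt₁⟩ := hc
    have ht₁' : t₀ < t₁ := by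
      rcases lt_or_eq_of_le (show t₀ ≤ t₁ from ht₁) with h | h
      · exact h
      · exfalso; rw [← h] at hUt₁; exact lt_irrefl _ hUt₁
    set S : Set ℝ := {t ∈ Set.Icc t₀ t₁ | U t ≤ a} with hS_def
    have hS_closed : IsClosed S := by
      have : S = Set.Icc t₀ t₁ ∩ U ⁻¹' (Set.Iic a) := by
        ext x; simp [hS_def, Set.mem_Icc, and_assoc]
      rw [this]
      exact isClosed_Icc.inter (isClosed_Iic.preimage hU.continuous)
    have hS_ne : S.Nonempty := ⟨t₀, ⟨le_refl _, le_of_lt ht₁'⟩, le_refl _⟩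
    have hS_bdd : BddAbove S := ⟨t₁, fun x hx => hx.1.2⟩
    set s := sSup S with hs_def
    have hsS : s ∈ S := hS_closed.csSup_mem hS_ne hS_bdd
    have hs_lt : s < t₁ := by
      rcases lt_or_eq_of_le hsS.1.2 with h | h
      · exact h
      · exfalso; rw [h] at hsS; exact absurd hsS.2 (not_le.mpr hUt₁)
    have hUs : U s ≤ a := hsS.2
    -- deriv U s < 0
    have hsq : a ^ 2 ≤ (U s) ^ 2 := by nlinarith
    have hd_neg : deriv U s < 0 := by
      have := (hKbound s).1
      rw [hderivU s]; nlinarith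
    -- slope argument: eventually U t < U s for t > s
    have hslope : Filter.Tendsto (slope U s) (nhdsWithin s {s}ᶜ) (nhds (deriv U s)) :=
      hasDerivAt_iff_tendsto_slope.mp (hU s).hasDerivAt
    have hslope' : Filter.Tendsto (slope U s) (nhdsWithin s (Set.Ioi s)) (nhds (deriv U s)) :=
      hslope.mono_left (nhdsWithin_mono _ (fun x hx => ne_of_gt hx))
    have hev : ∀ᶠ t in nhdsWithin s (Set.Ioi s), slope U s t < 0 :=
      hslope' (Iio_mem_nhds hd_neg)
    have hmem : Set.Ioc s t₁ ∈ nhdsWithin s (Set.Ioi s) :=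
      Ioc_mem_nhdsGT_of_mem ⟨le_refl s, hs_lt⟩
    obtain ⟨t, hslopet, htIoc⟩ := (hev.and (Filter.eventually_of_mem hmem fun x hx => hx)).exists
    have hts : s < t := htIoc.1
    have : U t < U s := by
      have := hslopet
      rw [slope_def_field, div_neg_iff] at this
      rcases this with ⟨h1, h2⟩ | ⟨h1, h2⟩
      · linarith [sub_pos.mpr hts]
      · linarith [sub_neg.mpr h1]
    have htS : t ∈ S := ⟨⟨le_trans hsS.1.1 (le_of_lt hts), htIoc.2⟩, le_of_lt (lt_of_lt_of_le this hUs)⟩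
    exact absurd (le_csSup hS_bdd htS) (not_le.mpr hts)
  -- Step 2: the function g t = -(U t)⁻¹ + ε t is antitone on [t₀, ∞)
  set ε : ℝ := 1 - K₀ / a ^ 2 with hε_def
  have hε : 0 < ε := by
    have ha2 : (0:ℝ) < a ^ 2 := pow_two_pos_of_ne_zero (ne_of_lt ha)
    rw [hε_def, sub_pos, div_lt_one ha2]; exact haK
  have hUne : ∀ t ∈ Set.Ici t₀, U t ≠ 0 := fun t ht =>
    ne_of_lt (lt_of_le_of_lt (hInv t ht) ha)
  set g : ℝ → ℝ := fun t => -(U t)⁻¹ + ε * t with hg_def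
  have hg_deriv : ∀ t ∈ Set.Ici t₀, HasDerivAt g (deriv U t / (U t) ^ 2 + ε) t := by
    intro t ht
    have h1 : HasDerivAt (fun t => (U t)⁻¹) (-(deriv U t) / (U t) ^ 2) t :=
      (hU t).hasDerivAt.inv (hUne t ht)
    have h2 : HasDerivAt (fun t => ε * t) ε t := by
      simpa using (hasDerivAt_id t).const_mul ε
    have := h1.neg.add h2
    have e : -(-(deriv U t) / (U t) ^ 2) + ε = deriv U t / (U t) ^ 2 + ε := by ring
    rw [e] at this
    exact this
  have hg_anti : AntitoneOn g (Set.Ici t₀) := by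
    apply antitoneOn_of_deriv_nonpos (convex_Ici t₀)
    · exact fun t ht => ((hg_deriv t ht).continuousAt).continuousWithinAt
    · intro t ht
      rw [interior_Ici] at ht
      exact ((hg_deriv t (Set.mem_Ici.mpr (le_of_lt (Set.mem_Ioi.mp ht)))).differentiableAt).differentiableWithinAt
    · intro t ht
      rw [interior_Ici] at ht
      have ht' : t ∈ Set.Ici t₀ := Set.mem_Ici.mpr (le_of_lt (Set.mem_Ioi.mp ht))
      rw [(hg_deriv t ht').deriv]
      have hUt : U t ≤ a := hInv t ht'
      have hUt2 : a ^ 2 ≤ (U t) ^ 2 := by nlinarith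
      have hUt2' : (0:ℝ) < (U t) ^ 2 := pow_two_pos_of_ne_zero (hUne t ht')
      have ha2 : (0:ℝ) < a ^ 2 := pow_two_pos_of_ne_zero (ne_of_lt ha)
      rw [hderivU t]
      have hK1 : -K₀ ≤ K t := (hKbound t).1
      have : (-(U t) ^ 2 - K t) / (U t) ^ 2 ≤ -1 + K₀ / (U t) ^ 2 := by
        rw [div_le_iff₀ hUt2']
        have : (-1 + K₀ / (U t) ^ 2) * (U t) ^ 2 = -(U t)^2 + K₀ := by
          rw [add_mul, div_mul_cancel₀ K₀ hUt2'.ne']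
          ring
        rw [this]; linarith
      have hK₀div : K₀ / (U t) ^ 2 ≤ K₀ / a ^ 2 := by
        apply div_le_div_of_nonneg_left hK₀ ha2 hUt2
      rw [hε_def]; linarith
  -- derive contradiction at a large time
  set T : ℝ := t₀ + (1 - a⁻¹) / ε with hT_def
  have haInv : (0:ℝ) < -a⁻¹ := by
    rw [neg_pos]; exact inv_neg''.mpr ha
  have hT_ge : t₀ ≤ T := by
    rw [hT_def]
    have : (0:ℝ) < (1 - a⁻¹) / ε := div_pos (by linarith) hε
    linarith
  have hgT : g T ≤ g t₀ := hg_anti (le_refl t₀) hT_ge hT_ge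
  have hUT_neg : U T < 0 := lt_of_le_of_lt (hInv T hT_ge) ha
  have hUTinv : (0:ℝ) < -(U T)⁻¹ := by rw [neg_pos]; exact inv_neg''.mpr hUT_neg
  have hεT : ε * (T - t₀) = 1 - a⁻¹ := by
    rw [hT_def]; field_simp; ring
  have : -(U T)⁻¹ + ε * T ≤ -a⁻¹ + ε * t₀ := hgT
  nlinarith
/-- **Global solutions of the Riccati equation are bounded by the curvature bound.**
Let `K₀ ≥ 0` and let `K : ℝ → ℝ` be continuous with `-K₀ ≤ K t ≤ 0` for all `t`.
If `U : ℝ → ℝ` is differentiable and satisfies the Riccati equation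
`U' t + (U t)² + K t = 0` for all `t ∈ ℝ`, then `|U t| ≤ √K₀` for all `t`. -/
theorem riccati_global_solution_bounded
    (K₀ : ℝ) (hK₀ : 0 ≤ K₀) (K : ℝ → ℝ) (hKcont : Continuous K)
    (hKbound : ∀ t : ℝ, -K₀ ≤ K t ∧ K t ≤ 0)
    (U : ℝ → ℝ) (hU : Differentiable ℝ U)
    (hRic : ∀ t : ℝ, deriv U t + (U t) ^ 2 + K t = 0) :
    ∀ t : ℝ, |U t| ≤ Real.sqrt K₀ := by
  have hlow := riccati_lower_aux K₀ hK₀ K hKbound U hU hRic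
  -- reflected solution
  set V : ℝ → ℝ := fun t => -U (-t) with hV_def
  have hV : Differentiable ℝ V := (hU.comp differentiable_neg).neg
  have hVderiv : ∀ t, deriv V t = deriv U (-t) := by
    intro t
    have h1 : HasDerivAt (fun t : ℝ => U (-t)) (deriv U (-t) * (-1)) t :=
      (hU (-t)).hasDerivAt.comp t (hasDerivAt_neg t)
    have h2 : HasDerivAt V (deriv U (-t)) t := by
      have h3 := h1.neg
      rw [mul_neg_one, neg_neg] at h3
      exact h3
    exact h2.deriv
  have hhigh := riccati_lower_aux K₀ hK₀ (fun t => K (-t))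
    (fun t => hKbound (-t)) V hV
    (fun t => by
      rw [hVderiv t, hV_def]
      simpa [neg_pow] using hRic (-t))
  intro t
  rw [abs_le]
  constructor
  · exact hlow t
  · have := hhigh (-t)
    simp only [hV_def, neg_neg] at this
    linarith
end

section
/- Existence and uniqueness of the Jacobi field vanishing at a prescribed time: let K : ℝ → ℝ be continuous with K(t) ≤ 0 for all t, and let T be a nonzero real number. Then there exists a unique twice continuously differentiable function J_T : ℝ → ℝ satisfying J_T''(t) + K(t)·J_T(t) = 0 for all t ∈ ℝ, J_T(0) = 1 and J_T(T) = 0. -/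
set_option maxHeartbeats 2000000

open intervalIntegral MeasureTheory Set Filter Topology Nat

noncomputable section JacobiAux

variable {K : ℝ → ℝ}

/-- Picard iterates for the integral equation of `J'' + K J = 0`, `J 0 = a`, `J' 0 = b`. -/
noncomputable def pic (K : ℝ → ℝ) (a b : ℝ) : ℕ → ℝ → ℝ
  | 0 => fun t => a + b * t
  | (n+1) => fun t => (∫ s in (0:ℝ)..t, s * (K s * pic K a b n s))
      - t * ∫ s in (0:ℝ)..t, K s * pic K a b n s

lemma pic_cont {K : ℝ → ℝ} (hK : Continuous K) (a b : ℝ) : ∀ n, Continuous (pic K a b n)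
  | 0 => by simp only [pic]; fun_prop
  | (n+1) => by
    have ih := pic_cont hK a b n
    have h1 : Continuous fun s => s * (K s * pic K a b n s) := continuous_id.mul (hK.mul ih)
    have h2 : Continuous fun s => K s * pic K a b n s := hK.mul ih
    have c1 : Continuous fun t => ∫ s in (0:ℝ)..t, s * (K s * pic K a b n s) :=
      intervalIntegral.continuous_primitive (fun a b => h1.intervalIntegrable a b) 0
    have c2 : Continuous fun t => ∫ s in (0:ℝ)..t, K s * pic K a b n s :=
      intervalIntegral.continuous_primitive (fun a b => h2.intervalIntegrable a b) 0
    exact (c1.sub (continuous_id.mul c2))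

/-- Auxiliary integral estimate: `|∫₀ᵗ g| ≤ c |t|^(n+1)/(n+1)` when `|g s| ≤ c |s|^n`. -/
lemma abs_integral_le_pow (g : ℝ → ℝ) (hg : Continuous g) (c : ℝ) (n : ℕ) (t : ℝ)
    (hb : ∀ s ∈ uIcc (0:ℝ) t, |g s| ≤ c * |s| ^ n) :
    |∫ s in (0:ℝ)..t, g s| ≤ c * |t| ^ (n+1) / (n+1) := by
  rcases le_or_gt 0 t with ht | ht
  · have h1 : |∫ s in (0:ℝ)..t, g s| ≤ ∫ s in (0:ℝ)..t, |g s| :=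
      intervalIntegral.abs_integral_le_integral_abs ht
    have h2 : (∫ s in (0:ℝ)..t, |g s|) ≤ ∫ s in (0:ℝ)..t, c * s ^ n := by
      apply intervalIntegral.integral_mono_on ht
        (hg.abs.intervalIntegrable 0 t)
        ((continuous_const.mul (continuous_pow n)).intervalIntegrable 0 t)
      intro s hs
      have h3 := hb s (by rw [uIcc_of_le ht]; exact hs)
      rwa [abs_of_nonneg hs.1] at h3
    have h4 : (∫ s in (0:ℝ)..t, c * s ^ n) = c * (t ^ (n+1) / (n+1)) := by
      rw [intervalIntegral.integral_const_mul, integral_pow]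
      ring
    rw [abs_of_nonneg ht]
    calc |∫ s in (0:ℝ)..t, g s| ≤ ∫ s in (0:ℝ)..t, c * s ^ n := h1.trans h2
      _ = c * t ^ (n+1) / (n+1) := by rw [h4]; ring
  · have hsym : (∫ s in (0:ℝ)..t, g s) = -∫ s in t..(0:ℝ), g s :=
      (intervalIntegral.integral_symm t 0)
    have h1 : |∫ s in t..(0:ℝ), g s| ≤ ∫ s in t..(0:ℝ), |g s| :=
      intervalIntegral.abs_integral_le_integral_abs ht.le
    have h2 : (∫ s in t..(0:ℝ), |g s|) ≤ ∫ s in t..(0:ℝ), c * (-s) ^ n := by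
      apply intervalIntegral.integral_mono_on ht.le
        (hg.abs.intervalIntegrable t 0)
        ((continuous_const.mul ((continuous_neg).pow n)).intervalIntegrable t 0)
      intro s hs
      have h3 := hb s (by rw [uIcc_of_ge ht.le]; exact hs)
      rwa [abs_of_nonpos hs.2] at h3
    have h4 : (∫ s in t..(0:ℝ), c * (-s) ^ n) = c * ((-t) ^ (n+1) / (n+1)) := by
      rw [intervalIntegral.integral_const_mul]
      have : (∫ s in t..(0:ℝ), (-s) ^ n) = ∫ s in (-(0:ℝ))..(-t), s ^ n := by
        rw [← intervalIntegral.integral_comp_neg fun s => s ^ n]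
      rw [this]
      simp only [neg_zero]
      rw [integral_pow]
      ring
    rw [hsym, abs_neg, abs_of_neg ht]
    calc |∫ s in t..(0:ℝ), g s| ≤ c * ((-t) ^ (n+1) / (n+1)) := h1.trans (h2.trans_eq h4)
      _ = c * (-t) ^ (n+1) / (n+1) := by ring

lemma pic_zero (K : ℝ → ℝ) (a b t : ℝ) : pic K a b 0 t = a + b * t := rfl

lemma pic_succ (K : ℝ → ℝ) (a b : ℝ) (n : ℕ) (t : ℝ) : pic K a b (n+1) t =
    (∫ s in (0:ℝ)..t, s * (K s * pic K a b n s))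
      - t * ∫ s in (0:ℝ)..t, K s * pic K a b n s := rfl


/-- One step of the Picard estimate. -/
lemma step_bound (hK : Continuous K) {f : ℝ → ℝ} (hf : Continuous f)
    {R M C : ℝ} (hM : ∀ s ∈ Icc (-R) R, |K s| ≤ M) {n : ℕ}
    (hb : ∀ s ∈ Icc (-R) R, |f s| ≤ C * |s| ^ n / n !) {t : ℝ} (ht : t ∈ Icc (-R) R) :
    |(∫ s in (0:ℝ)..t, s * (K s * f s)) - t * ∫ s in (0:ℝ)..t, K s * f s|
      ≤ (2 * R * M * C) * |t| ^ (n + 1) / (n + 1)! := by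
  have habs : |t| ≤ R := abs_le.2 ⟨ht.1, ht.2⟩
  have hR : (0:ℝ) ≤ R := le_trans (abs_nonneg t) habs
  have hKf : Continuous fun s => K s * f s := hK.mul hf
  -- rewrite as a single integral
  have hre : (∫ s in (0:ℝ)..t, (s - t) * (K s * f s))
      = (∫ s in (0:ℝ)..t, s * (K s * f s)) - t * ∫ s in (0:ℝ)..t, K s * f s := by
    have h0 : (∫ s in (0:ℝ)..t, (s - t) * (K s * f s))
        = ∫ s in (0:ℝ)..t, (s * (K s * f s) - t * (K s * f s)) := by
      congr 1; ext s; ring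
    rw [h0, intervalIntegral.integral_sub (f := fun s => s * (K s * f s)) (g := fun s => t * (K s * f s)) ((continuous_id'.mul hKf).intervalIntegrable 0 t)
      ((continuous_const.mul hKf).intervalIntegrable 0 t),
      intervalIntegral.integral_const_mul]
  rw [← hre]
  have key : |∫ s in (0:ℝ)..t, (s - t) * (K s * f s)|
      ≤ (2 * R * M * C / n !) * |t| ^ (n + 1) / (n + 1) := by
    apply abs_integral_le_pow _ ((continuous_id.sub continuous_const).mul hKf) _ n
    intro s hs
    have hsub : s ∈ Icc (-R) R := by
      have h1 := abs_le.1 habs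
      rcases le_total 0 t with h | h
      · rw [uIcc_of_le h] at hs; exact ⟨le_trans (by linarith) hs.1, le_trans hs.2 (abs_le.1 habs).2⟩
      · rw [uIcc_of_ge h] at hs; exact ⟨le_trans h1.1 hs.1, le_trans hs.2 hR⟩
    have hst : |s - t| ≤ 2 * R := by
      have h1 := abs_le.1 habs
      have h2 : -R ≤ s := hsub.1
      have h3 : s ≤ R := hsub.2
      rw [abs_le]; constructor <;> linarith
    have hfb := hb s hsub
    have hKb := hM s hsub
    have hM0 : (0:ℝ) ≤ M := le_trans (abs_nonneg _) hKb
    have hC0 : (0:ℝ) ≤ C * |s| ^ n / n ! := le_trans (abs_nonneg _) hfb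
    calc |(s - t) * (K s * f s)| = |s - t| * (|K s| * |f s|) := by
          rw [abs_mul, abs_mul]
      _ ≤ (2 * R) * (M * (C * |s| ^ n / n !)) := by
          apply mul_le_mul hst _ (by positivity) (by linarith)
          exact mul_le_mul hKb hfb (abs_nonneg _) hM0
      _ = (2 * R * M * C / n !) * |s| ^ n := by ring
  refine key.trans (le_of_eq ?_)
  rw [Nat.factorial_succ]
  push_cast
  have h1 : (n ! : ℝ) ≠ 0 := by positivity
  have h2 : ((n:ℝ) + 1) ≠ 0 := by positivity
  field_simp

/-- The generic iterated bound. -/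
lemma iter_bound (hK : Continuous K) {R M : ℝ} (hM : ∀ s ∈ Icc (-R) R, |K s| ≤ M)
    (f : ℕ → ℝ → ℝ) (hfc : ∀ n, Continuous (f n)) {C : ℝ}
    (h0 : ∀ t ∈ Icc (-R) R, |f 0 t| ≤ C)
    (hrec : ∀ n t, f (n+1) t = (∫ s in (0:ℝ)..t, s * (K s * f n s))
      - t * ∫ s in (0:ℝ)..t, K s * f n s) :
    ∀ n, ∀ t ∈ Icc (-R) R, |f n t| ≤ C * (2 * R * M) ^ n * |t| ^ n / n ! := by
  intro n
  induction n with
  | zero => intro t ht; simpa using h0 t ht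
  | succ n ih =>
    intro t ht
    rw [hrec n t]
    have := step_bound hK (hfc n) hM (C := C * (2 * R * M) ^ n)
      (fun s hs => by
        have := ih s hs
        calc |f n s| ≤ C * (2 * R * M) ^ n * |s| ^ n / n ! := this
          _ = C * (2 * R * M) ^ n * |s| ^ n / n ! := rfl) ht
    refine this.trans (le_of_eq ?_)
    ring


/-- A nonnegative bound for `|K|` on `[-R, R]`. -/
lemma exists_K_bound (hK : Continuous K) (R : ℝ) :
    ∃ M : ℝ, 0 ≤ M ∧ ∀ s ∈ Icc (-R) R, |K s| ≤ M := by
  obtain ⟨M, hM⟩ := (isCompact_Icc (a := -R) (b := R)).exists_bound_of_continuousOn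
    hK.continuousOn
  exact ⟨max M 0, le_max_right _ _, fun s hs => (hM s hs).trans (le_max_left _ _)⟩

lemma pic_bound (hK : Continuous K) (a b : ℝ) {R M : ℝ} (hR : 0 ≤ R)
    (hM : ∀ s ∈ Icc (-R) R, |K s| ≤ M) :
    ∀ n, ∀ t ∈ Icc (-R) R, |pic K a b n t|
      ≤ (|a| + |b| * R) * (2 * R * M) ^ n * |t| ^ n / n ! := by
  apply iter_bound hK hM _ (pic_cont hK a b)
  · intro t ht
    rw [pic_zero]
    have : |t| ≤ R := abs_le.2 ⟨ht.1, ht.2⟩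
    calc |a + b * t| ≤ |a| + |b| * |t| := by
          refine (abs_add_le _ _).trans ?_; rw [abs_mul]
      _ ≤ |a| + |b| * R := by nlinarith [abs_nonneg b]
  · exact pic_succ K a b

lemma pic_bound' (hK : Continuous K) (a b : ℝ) {R M : ℝ} (hR : 0 ≤ R)
    (hM : ∀ s ∈ Icc (-R) R, |K s| ≤ M) (hM0 : 0 ≤ M) :
    ∀ n, ∀ t ∈ Icc (-R) R, |pic K a b n t|
      ≤ (|a| + |b| * R) * (2 * R * M * R) ^ n / n ! := by
  intro n t ht
  refine (pic_bound hK a b hR hM n t ht).trans ?_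
  have h1 : |t| ≤ R := abs_le.2 ⟨ht.1, ht.2⟩
  have h2 : (2 * R * M) ^ n * |t| ^ n ≤ (2 * R * M * R) ^ n := by
    rw [← mul_pow]
    apply pow_le_pow_left₀ (by positivity)
    exact mul_le_mul_of_nonneg_left h1 (by positivity)
  have h3 : (0:ℝ) ≤ |a| + |b| * R := by positivity
  have h4 : (0:ℝ) < (n ! : ℝ) := by positivity
  apply (div_le_div_iff_of_pos_right h4).mpr
  calc (|a| + |b| * R) * (2 * R * M) ^ n * |t| ^ n
      = (|a| + |b| * R) * ((2 * R * M) ^ n * |t| ^ n) := by ring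
    _ ≤ (|a| + |b| * R) * (2 * R * M * R) ^ n := mul_le_mul_of_nonneg_left h2 h3

lemma pic_summable (hK : Continuous K) (a b t : ℝ) :
    Summable fun n => pic K a b n t := by
  obtain ⟨M, hM0, hM⟩ := exists_K_bound hK |t|
  have ht : t ∈ Icc (-|t|) |t| := ⟨neg_abs_le t, le_abs_self t⟩
  apply Summable.of_norm
  apply Summable.of_nonneg_of_le (fun n => norm_nonneg _)
    (fun n => ?_) (((Real.summable_pow_div_factorial (2 * |t| * M * |t|)).mul_left
      ((|a| + |b| * |t|))))
  simpa [Real.norm_eq_abs, mul_div_assoc] using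
    pic_bound' hK a b (abs_nonneg t) hM hM0 n t ht

/-- The solution of the linear ODE with `J 0 = a`, `J' 0 = b`, as a Picard series. -/
noncomputable def Jsol (K : ℝ → ℝ) (a b : ℝ) : ℝ → ℝ := fun t => ∑' n, pic K a b n t

lemma Jsol_cont (hK : Continuous K) (a b : ℝ) : Continuous (Jsol K a b) := by
  rw [continuous_iff_continuousAt]
  intro t₀
  set R := |t₀| + 1 with hR
  obtain ⟨M, hM0, hM⟩ := exists_K_bound hK R
  have hR0 : (0:ℝ) ≤ R := by positivity
  have hco : ContinuousOn (Jsol K a b) (Icc (-R) R) := by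
    apply continuousOn_tsum (fun n => (pic_cont hK a b n).continuousOn)
      (((Real.summable_pow_div_factorial (2 * R * M * R)).mul_left (|a| + |b| * R)))
    intro n x hx
    simpa [Real.norm_eq_abs, mul_div_assoc] using pic_bound' hK a b hR0 hM hM0 n x hx
  apply hco.continuousAt
  apply Icc_mem_nhds <;> cases abs_le.1 (le_refl |t₀|) <;> [linarith [neg_abs_le t₀]; linarith [le_abs_self t₀]]

/-- The Picard series satisfies the integral equation. -/
lemma Jsol_eq (hK : Continuous K) (a b t : ℝ) :
    Jsol K a b t = a + b * t + ((∫ s in (0:ℝ)..t, s * (K s * Jsol K a b s))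
      - t * ∫ s in (0:ℝ)..t, K s * Jsol K a b s) := by
  set R := |t| with hRdef
  obtain ⟨M, hM0, hM⟩ := exists_K_bound hK R
  have hR0 : (0:ℝ) ≤ R := abs_nonneg t
  set C := |a| + |b| * R with hC
  have hC0 : 0 ≤ C := by positivity
  have hsubI : ∀ s, s ∈ uIoc (0:ℝ) t → s ∈ Icc (-R) R := by
    intro s hs
    have hT1 : t ≤ R := le_abs_self t
    have hT2 : -R ≤ t := neg_abs_le t
    rcases Set.mem_uIoc.mp hs with ⟨h1, h2⟩ | ⟨h1, h2⟩
    · exact ⟨by linarith, by linarith⟩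
    · exact ⟨by linarith, by linarith⟩
  -- first HasSum: integrals of K * pic n
  have hs1 : HasSum (fun n => ∫ s in (0:ℝ)..t, K s * pic K a b n s)
      (∫ s in (0:ℝ)..t, K s * Jsol K a b s) := by
    apply intervalIntegral.hasSum_integral_of_dominated_convergence
      (bound := fun n _ => M * (C * ((2 * R * M * R) ^ n / n !)))
    · exact fun n => ((hK.mul (pic_cont hK a b n)).aestronglyMeasurable)
    · intro n
      filter_upwards with s hs
      have hb := pic_bound' hK a b hR0 hM hM0 n s (hsubI s hs)
      rw [Real.norm_eq_abs, abs_mul]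
      exact (mul_le_mul (hM s (hsubI s hs)) hb (abs_nonneg _) hM0).trans (le_of_eq (by ring))
    · filter_upwards with s _
      exact ((Real.summable_pow_div_factorial (2 * R * M * R)).mul_left C).mul_left M
    · exact intervalIntegrable_const
    · filter_upwards with s _
      exact ((pic_summable hK a b s).hasSum).mul_left (K s)
  have hs2 : HasSum (fun n => ∫ s in (0:ℝ)..t, s * (K s * pic K a b n s))
      (∫ s in (0:ℝ)..t, s * (K s * Jsol K a b s)) := by
    apply intervalIntegral.hasSum_integral_of_dominated_convergence
      (bound := fun n _ => R * (M * (C * ((2 * R * M * R) ^ n / n !))))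
    · exact fun n => ((continuous_id'.mul (hK.mul (pic_cont hK a b n))).aestronglyMeasurable)
    · intro n
      filter_upwards with s hs
      have hsI := hsubI s hs
      have hb := pic_bound' hK a b hR0 hM hM0 n s hsI
      have habs : |s| ≤ R := abs_le.2 ⟨hsI.1, hsI.2⟩
      rw [Real.norm_eq_abs, abs_mul, abs_mul]
      have h1 : |K s| * |pic K a b n s| ≤ M * (C * ((2 * R * M * R) ^ n / n !)) :=
        (mul_le_mul (hM s hsI) hb (abs_nonneg _) hM0).trans (le_of_eq (by ring))
      exact mul_le_mul habs h1 (by positivity) hR0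
    · filter_upwards with s _
      exact (((Real.summable_pow_div_factorial (2 * R * M * R)).mul_left C).mul_left
        M).mul_left R
    · exact intervalIntegrable_const
    · filter_upwards with s _
      exact (((pic_summable hK a b s).hasSum).mul_left (K s)).mul_left s
  have hshift : HasSum (fun n => pic K a b (n+1) t)
      ((∫ s in (0:ℝ)..t, s * (K s * Jsol K a b s))
        - t * ∫ s in (0:ℝ)..t, K s * Jsol K a b s) := by
    simp only [pic_succ]
    exact hs2.sub (hs1.mul_left t)
  have hsum := (pic_summable hK a b t)
  have h0 : Jsol K a b t = pic K a b 0 t + ∑' n, pic K a b (n+1) t := by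
    exact hsum.tsum_eq_zero_add
  rw [h0, hshift.tsum_eq, pic_zero]



/-- Regularity: a continuous solution of the integral equation is a `C²` solution of the ODE. -/
lemma regular (hK : Continuous K) (a b : ℝ) (J : ℝ → ℝ) (hJ : Continuous J)
    (heq : ∀ t, J t = a + b * t + ((∫ s in (0:ℝ)..t, s * (K s * J s))
      - t * ∫ s in (0:ℝ)..t, K s * J s)) :
    ContDiff ℝ 2 J ∧ (∀ t, deriv J t = b - ∫ s in (0:ℝ)..t, K s * J s) ∧
      (∀ t, deriv (deriv J) t + K t * J t = 0) ∧ J 0 = a ∧ deriv J 0 = b := by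
  have hKJ : Continuous fun s => K s * J s := hK.mul hJ
  have hsKJ : Continuous fun s => s * (K s * J s) := continuous_id'.mul hKJ
  set g : ℝ → ℝ := fun t => ∫ s in (0:ℝ)..t, K s * J s with hgdef
  set h : ℝ → ℝ := fun t => ∫ s in (0:ℝ)..t, s * (K s * J s) with hhdef
  have hg : ∀ t, HasDerivAt g (K t * J t) t :=
    fun t => (hKJ.integral_hasStrictDerivAt 0 t).hasDerivAt
  have hh : ∀ t, HasDerivAt h (t * (K t * J t)) t :=
    fun t => (hsKJ.integral_hasStrictDerivAt 0 t).hasDerivAt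
  have hgc : Continuous g := intervalIntegral.continuous_primitive
    (fun a b => hKJ.intervalIntegrable a b) 0
  have hJ' : ∀ t, HasDerivAt J (b - g t) t := by
    intro t
    have hrhs : HasDerivAt (fun t => a + b * t + (h t - t * g t))
        (b - g t) t := by
      have h1 : HasDerivAt (fun t : ℝ => a + b * t) b t := by
        simpa using ((hasDerivAt_id t).const_mul b).const_add a
      have h2 : HasDerivAt (fun t => t * g t) (1 * g t + t * (K t * J t)) t :=
        (hasDerivAt_id t).mul (hg t)
      have h3 := h1.add ((hh t).sub h2)
      have h4 : b - g t = b + (t * (K t * J t) - (1 * g t + t * (K t * J t))) := by ring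
      rw [h4]; exact h3
    exact hrhs.congr_of_eventuallyEq (Eventually.of_forall heq)
  have hderiv : deriv J = fun t => b - g t := funext fun t => (hJ' t).deriv
  have hJ'' : ∀ t, HasDerivAt (deriv J) (-(K t * J t)) t := by
    intro t
    rw [hderiv]
    simpa using (hg t).const_sub b
  have hdd : ∀ t, deriv (deriv J) t = -(K t * J t) := fun t => (hJ'' t).deriv
  refine ⟨?_, fun t => by rw [hderiv], fun t => by rw [hdd t]; ring, ?_, ?_⟩
  · rw [show (2 : WithTop ℕ∞) = 1 + 1 from rfl, contDiff_succ_iff_deriv]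
    refine ⟨fun t => (hJ' t).differentiableAt, by simp, ?_⟩
    rw [contDiff_one_iff_deriv]
    refine ⟨fun t => (hJ'' t).differentiableAt, ?_⟩
    have : deriv (deriv J) = fun t => -(K t * J t) := funext hdd
    rw [this]
    exact (hK.mul hJ).neg
  · rw [heq 0]; simp
  · rw [hderiv]; simp [hgdef]

/-- Converse: a `C²` solution of the ODE satisfies the integral equation. -/
lemma toIntegralEq (hK : Continuous K) (J : ℝ → ℝ) (hJ : ContDiff ℝ 2 J)
    (hODE : ∀ t, deriv (deriv J) t + K t * J t = 0) :
    ∀ t, J t = J 0 + deriv J 0 * t + ((∫ s in (0:ℝ)..t, s * (K s * J s))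
      - t * ∫ s in (0:ℝ)..t, K s * J s) := by
  have hJc : Continuous J := hJ.continuous
  have hd1 : Differentiable ℝ J := hJ.differentiable (by norm_num)
  have hd2 : Differentiable ℝ (deriv J) := by
    have h2 := (contDiff_succ_iff_deriv (n := 1)).mp
      (by rw [show ((1:WithTop ℕ∞) + 1) = 2 from rfl]; exact hJ)
    exact h2.2.2.differentiable one_ne_zero
  have hKJ : Continuous fun s => K s * J s := hK.mul hJc
  have hsKJ : Continuous fun s => s * (K s * J s) := continuous_id'.mul hKJ
  set g : ℝ → ℝ := fun t => ∫ s in (0:ℝ)..t, K s * J s with hgdef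
  set h : ℝ → ℝ := fun t => ∫ s in (0:ℝ)..t, s * (K s * J s) with hhdef
  have hg : ∀ t, HasDerivAt g (K t * J t) t :=
    fun t => (hKJ.integral_hasStrictDerivAt 0 t).hasDerivAt
  have hh : ∀ t, HasDerivAt h (t * (K t * J t)) t :=
    fun t => (hsKJ.integral_hasStrictDerivAt 0 t).hasDerivAt
  -- deriv J + g is constant
  have hconst : ∀ t, deriv J t + g t = deriv J 0 := by
    have hφ : Differentiable ℝ (fun t => deriv J t + g t) :=
      fun t => ((hd2 t).add (hg t).differentiableAt)
    have hφ' : ∀ t, deriv (fun t => deriv J t + g t) t = 0 := by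
      intro t
      have h1 : HasDerivAt (fun t => deriv J t + g t)
          (deriv (deriv J) t + K t * J t) t :=
        ((hd2 t).hasDerivAt).add (hg t)
      rw [h1.deriv, hODE t]
    intro t
    have := is_const_of_deriv_eq_zero hφ hφ' t 0
    simpa [hgdef] using this
  have hJ' : ∀ t, deriv J t = deriv J 0 - g t := fun t => by
    have := hconst t; linarith
  -- J - candidate is constant
  set F : ℝ → ℝ := fun t => J 0 + deriv J 0 * t + (h t - t * g t) with hFdef
  have hF' : ∀ t, HasDerivAt F (deriv J 0 - g t) t := by
    intro t
    have h1 : HasDerivAt (fun t : ℝ => J 0 + deriv J 0 * t) (deriv J 0) t := by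
      simpa using ((hasDerivAt_id t).const_mul (deriv J 0)).const_add (J 0)
    have h2 : HasDerivAt (fun t => t * g t) (1 * g t + t * (K t * J t)) t :=
      (hasDerivAt_id t).mul (hg t)
    have h3 := h1.add ((hh t).sub h2)
    have h4 : deriv J 0 - g t = deriv J 0 + (t * (K t * J t) - (1 * g t + t * (K t * J t))) := by
      ring
    rw [h4]; exact h3
  have hdiff : ∀ t, J t - F t = J 0 - F 0 := by
    intro t
    apply is_const_of_deriv_eq_zero (f := fun t => J t - F t)
    · exact fun t => ((hd1 t).sub (hF' t).differentiableAt)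
    · intro x
      have h1 : HasDerivAt (fun t => J t - F t) ((deriv J 0 - g x) - (deriv J 0 - g x)) x :=
        (by rw [← hJ' x]; exact (hd1 x).hasDerivAt : HasDerivAt J (deriv J 0 - g x) x).sub (hF' x)
      simpa using h1.deriv
  intro t
  have hF0 : F 0 = J 0 := by simp [hFdef, hgdef, hhdef]
  have := hdiff t
  rw [hF0] at this
  have : J t = F t := by linarith
  rw [this]


/-- Uniqueness of continuous solutions of the integral equation. -/
lemma intEq_unique (hK : Continuous K) (a b : ℝ) (J₁ J₂ : ℝ → ℝ)
    (h₁ : Continuous J₁) (h₂ : Continuous J₂)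
    (e₁ : ∀ t, J₁ t = a + b * t + ((∫ s in (0:ℝ)..t, s * (K s * J₁ s))
      - t * ∫ s in (0:ℝ)..t, K s * J₁ s))
    (e₂ : ∀ t, J₂ t = a + b * t + ((∫ s in (0:ℝ)..t, s * (K s * J₂ s))
      - t * ∫ s in (0:ℝ)..t, K s * J₂ s)) :
    J₁ = J₂ := by
  set w : ℝ → ℝ := fun t => J₁ t - J₂ t with hwdef
  have hwc : Continuous w := h₁.sub h₂
  have hrec : ∀ t, w t = (∫ s in (0:ℝ)..t, s * (K s * w s))
      - t * ∫ s in (0:ℝ)..t, K s * w s := by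
    intro t
    have hint1 : (∫ s in (0:ℝ)..t, s * (K s * w s))
        = (∫ s in (0:ℝ)..t, s * (K s * J₁ s)) - ∫ s in (0:ℝ)..t, s * (K s * J₂ s) := by
      rw [← intervalIntegral.integral_sub (f := fun s => s * (K s * J₁ s)) (g := fun s => s * (K s * J₂ s))
        ((continuous_id'.mul (hK.mul h₁)).intervalIntegrable 0 t)
        ((continuous_id'.mul (hK.mul h₂)).intervalIntegrable 0 t)]
      congr 1; ext s; simp [hwdef]; ring
    have hint2 : (∫ s in (0:ℝ)..t, K s * w s)
        = (∫ s in (0:ℝ)..t, K s * J₁ s) - ∫ s in (0:ℝ)..t, K s * J₂ s := by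
      rw [← intervalIntegral.integral_sub (f := fun s => K s * J₁ s) (g := fun s => K s * J₂ s)
        ((hK.mul h₁).intervalIntegrable 0 t) ((hK.mul h₂).intervalIntegrable 0 t)]
      congr 1; ext s; simp [hwdef]; ring
    have := e₁ t
    have := e₂ t
    simp only [hwdef]
    rw [hint1, hint2]
    linarith [e₁ t, e₂ t, mul_sub t (∫ s in (0:ℝ)..t, K s * J₁ s) (∫ s in (0:ℝ)..t, K s * J₂ s)]
  suffices hz : ∀ t, w t = 0 by
    funext t
    have := hz t
    simp only [hwdef] at this
    linarith
  intro τ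
  set R := |τ| with hR
  obtain ⟨M, hM0, hM⟩ := exists_K_bound hK R
  obtain ⟨C, hC⟩ := (isCompact_Icc (a := -R) (b := R)).exists_bound_of_continuousOn
    hwc.continuousOn
  have hbnd := iter_bound hK hM (fun _ => w) (fun _ => hwc)
    (C := C) (fun t ht => hC t ht) (fun n t => hrec t)
  have hτ : τ ∈ Icc (-R) R := ⟨neg_abs_le τ, le_abs_self τ⟩
  have hkey : ∀ n : ℕ, |w τ| ≤ C * (2 * R * M * R) ^ n / n ! := by
    intro n
    refine (hbnd n τ hτ).trans ?_
    have h1 : |τ| ≤ R := le_refl R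
    have hC0 : 0 ≤ C := le_trans (abs_nonneg _) (hC τ hτ)
    have h2 : (2 * R * M) ^ n * |τ| ^ n ≤ (2 * R * M * R) ^ n := by
      have h1' : |τ| ≤ R := h1
      calc (2 * R * M) ^ n * |τ| ^ n = ((2 * R * M) * |τ|) ^ n := (mul_pow _ _ _).symm
        _ ≤ (2 * R * M * R) ^ n := by
            apply pow_le_pow_left₀ (by positivity)
            nlinarith [abs_nonneg τ, mul_le_mul_of_nonneg_left h1' (by positivity : (0:ℝ) ≤ 2 * R * M)]
    have h4 : (0:ℝ) < (n ! : ℝ) := by positivity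
    apply (div_le_div_iff_of_pos_right h4).mpr
    calc C * (2 * R * M) ^ n * |τ| ^ n = C * ((2 * R * M) ^ n * |τ| ^ n) := by ring
      _ ≤ C * (2 * R * M * R) ^ n := mul_le_mul_of_nonneg_left h2 hC0
  have hlim : Tendsto (fun n : ℕ => C * (2 * R * M * R) ^ n / n !) atTop (𝓝 0) := by
    have := ((Real.summable_pow_div_factorial (2 * R * M * R)).mul_left C).tendsto_atTop_zero
    simpa [mul_div_assoc] using this
  have : |w τ| ≤ 0 := ge_of_tendsto hlim (Eventually.of_forall hkey)
  have := abs_nonneg (w τ)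
  have : |w τ| = 0 := le_antisymm ‹|w τ| ≤ 0› (abs_nonneg _)
  exact abs_eq_zero.mp this



/-- Energy argument: a solution of `w'' + K w = 0` with `K ≤ 0` vanishing at two points
vanishes on the whole interval between them. -/
lemma bvp_zero_on_Icc (hK : Continuous K) (hKneg : ∀ t, K t ≤ 0)
    (w : ℝ → ℝ) (hw : ContDiff ℝ 2 w)
    (hODE : ∀ t, deriv (deriv w) t + K t * w t = 0)
    {p q : ℝ} (hpq : p < q) (hwp : w p = 0) (hwq : w q = 0) :
    ∀ t ∈ Icc p q, w t = 0 := by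
  have hwc : Continuous w := hw.continuous
  have hd1 : Differentiable ℝ w := hw.differentiable (by norm_num)
  have hd2 : Differentiable ℝ (deriv w) := by
    have h2 := (contDiff_succ_iff_deriv (n := 1)).mp
      (by rw [show ((1:WithTop ℕ∞) + 1) = 2 from rfl]; exact hw)
    exact h2.2.2.differentiable one_ne_zero
  have hc2 : Continuous (deriv w) := hd2.continuous
  have hdd : ∀ t, deriv (deriv w) t = -(K t * w t) := fun t => by linarith [hODE t]
  have hc3 : Continuous (deriv (deriv w)) := by
    have : deriv (deriv w) = fun t => -(K t * w t) := funext hdd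
    rw [this]; exact (hK.mul hwc).neg
  -- energy E = w * w'
  have hE : ∀ t, HasDerivAt (fun t => w t * deriv w t)
      (deriv w t * deriv w t + w t * deriv (deriv w) t) t :=
    fun t => ((hd1 t).hasDerivAt).mul ((hd2 t).hasDerivAt)
  have hEint : (∫ t in p..q, (deriv w t * deriv w t + w t * deriv (deriv w) t)) = 0 := by
    rw [intervalIntegral.integral_eq_sub_of_hasDerivAt (fun t _ => hE t)
      (((hc2.mul hc2).add (hwc.mul hc3)).intervalIntegrable p q)]
    rw [hwp, hwq]; ring
  -- split the integral
  have hint1 : IntervalIntegrable (fun t => deriv w t * deriv w t) volume p q :=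
    (hc2.mul hc2).intervalIntegrable p q
  have hint2 : IntervalIntegrable (fun t => w t * deriv (deriv w) t) volume p q :=
    (hwc.mul hc3).intervalIntegrable p q
  have hsplit : (∫ t in p..q, deriv w t * deriv w t)
      + (∫ t in p..q, w t * deriv (deriv w) t) = 0 := by
    rw [← intervalIntegral.integral_add hint1 hint2]; exact hEint
  have hneg : 0 ≤ ∫ t in p..q, w t * deriv (deriv w) t := by
    apply intervalIntegral.integral_nonneg hpq.le
    intro u _
    rw [hdd u]
    have := hKneg u
    nlinarith [sq_nonneg (w u)]
  have hnonneg : 0 ≤ ∫ t in p..q, deriv w t * deriv w t :=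
    intervalIntegral.integral_nonneg hpq.le (fun u _ => mul_self_nonneg _)
  have hzero : (∫ t in p..q, deriv w t * deriv w t) = 0 := by linarith
  -- deduce deriv w = 0 on Ioo p q via the primitive
  set F : ℝ → ℝ := fun x => ∫ t in p..x, deriv w t * deriv w t with hFdef
  have hFmono : ∀ x ∈ Icc p q, F x = 0 := by
    intro x hx
    have h1 : 0 ≤ F x := intervalIntegral.integral_nonneg hx.1
      (fun u _ => mul_self_nonneg _)
    have h2 : F x ≤ F q := by
      have hadj : F x + (∫ t in x..q, deriv w t * deriv w t) = F q :=
        intervalIntegral.integral_add_adjacent_intervals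
          ((hc2.mul hc2).intervalIntegrable p x) ((hc2.mul hc2).intervalIntegrable x q)
      have h3 : 0 ≤ ∫ t in x..q, deriv w t * deriv w t :=
        intervalIntegral.integral_nonneg hx.2 (fun u _ => mul_self_nonneg _)
      linarith
    have h4 : F q = 0 := hzero
    linarith
  have hdw0 : ∀ x ∈ Ioo p q, deriv w x = 0 := by
    intro x hx
    have hFd : HasDerivAt F (deriv w x * deriv w x) x :=
      ((hc2.mul hc2).integral_hasStrictDerivAt p x).hasDerivAt
    have hF0 : HasDerivAt F 0 x := by
      have hev : F =ᶠ[𝓝 x] (fun _ => 0) := by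
        filter_upwards [Icc_mem_nhds hx.1 hx.2] with y hy
        exact hFmono y hy
      exact (hasDerivAt_const x 0).congr_of_eventuallyEq hev
    have := hFd.unique hF0
    nlinarith [this]
  have hdwIcc : ∀ x ∈ Icc p q, deriv w x = 0 := by
    have hEq : EqOn (deriv w) (fun _ => 0) (closure (Ioo p q)) :=
      (Set.EqOn.closure (fun x hx => hdw0 x hx) hc2 continuous_const)
    intro x hx
    rw [closure_Ioo hpq.ne] at hEq
    exact hEq hx
  -- conclude w = 0 on Icc
  intro x hx
  have hsub : Icc p x ⊆ Icc p q := Icc_subset_Icc le_rfl hx.2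
  have hftc : (∫ t in p..x, deriv w t) = w x - w p :=
    intervalIntegral.integral_deriv_eq_sub (fun t _ => hd1 t)
      (hc2.intervalIntegrable p x)
  have hzero' : (∫ t in p..x, deriv w t) = 0 := by
    have : EqOn (deriv w) (fun _ => 0) (uIcc p x) := by
      intro u hu
      apply hdwIcc
      rw [uIcc_of_le hx.1] at hu
      exact hsub hu
    rw [intervalIntegral.integral_congr this]
    simp
  rw [hzero', hwp] at hftc
  linarith [hftc]


lemma deriv_differentiable_of_contDiff2 {f : ℝ → ℝ} (hf : ContDiff ℝ 2 f) :
    Differentiable ℝ (deriv f) := by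
  have h2 := (contDiff_succ_iff_deriv (n := 1)).mp
    (by rw [show ((1:WithTop ℕ∞) + 1) = 2 from rfl]; exact hf)
  exact h2.2.2.differentiable one_ne_zero

/-- Global vanishing for a solution with two zeros, `K ≤ 0`. -/
lemma bvp_zero_global (hK : Continuous K) (hKneg : ∀ t, K t ≤ 0)
    (w : ℝ → ℝ) (hw : ContDiff ℝ 2 w)
    (hODE : ∀ t, deriv (deriv w) t + K t * w t = 0)
    {T : ℝ} (hT : T ≠ 0) (hw0 : w 0 = 0) (hwT : w T = 0) :
    ∀ t, w t = 0 := by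
  have hd1 : Differentiable ℝ w := hw.differentiable (by norm_num)
  -- derivative of w at 0 is 0
  have hder0 : deriv w 0 = 0 := by
    rcases hT.lt_or_gt with hTneg | hTpos
    · -- T < 0 : w = 0 on [T, 0]
      have hIcc := bvp_zero_on_Icc hK hKneg w hw hODE hTneg hwT hw0
      have hW : HasDerivWithinAt w (deriv w 0) (Iic 0) 0 :=
        ((hd1 0).hasDerivAt).hasDerivWithinAt
      have hev : w =ᶠ[𝓝[Iic (0:ℝ)] 0] (fun _ => 0) := by
        filter_upwards [Icc_mem_nhdsLE_of_mem (⟨hTneg, le_rfl⟩ : (0:ℝ) ∈ Ioc T 0)] with y hy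
        exact hIcc y hy
      have hconst : HasDerivWithinAt (fun _ : ℝ => (0:ℝ)) (deriv w 0) (Iic 0) 0 :=
        hW.congr_of_eventuallyEq hev.symm hw0.symm
      have hu : UniqueDiffWithinAt ℝ (Iic (0:ℝ)) 0 :=
        uniqueDiffOn_Iic 0 0 self_mem_Iic
      have h1 := hconst.derivWithin hu
      have h2 := (hasDerivWithinAt_const (0:ℝ) (Iic (0:ℝ)) (0:ℝ)).derivWithin hu
      rw [← h1, h2]
    · -- T > 0 : w = 0 on [0, T]
      have hIcc := bvp_zero_on_Icc hK hKneg w hw hODE hTpos hw0 hwT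
      have hW : HasDerivWithinAt w (deriv w 0) (Ici 0) 0 :=
        ((hd1 0).hasDerivAt).hasDerivWithinAt
      have hev : w =ᶠ[𝓝[Ici (0:ℝ)] 0] (fun _ => 0) := by
        filter_upwards [Icc_mem_nhdsGE_of_mem (⟨le_rfl, hTpos⟩ : (0:ℝ) ∈ Ico 0 T)] with y hy
        exact hIcc y hy
      have hconst : HasDerivWithinAt (fun _ : ℝ => (0:ℝ)) (deriv w 0) (Ici 0) 0 :=
        hW.congr_of_eventuallyEq hev.symm hw0.symm
      have hu : UniqueDiffWithinAt ℝ (Ici (0:ℝ)) 0 :=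
        uniqueDiffOn_Ici 0 0 self_mem_Ici
      have h1 := hconst.derivWithin hu
      have h2 := (hasDerivWithinAt_const (0:ℝ) (Ici (0:ℝ)) (0:ℝ)).derivWithin hu
      rw [← h1, h2]
  -- w satisfies the integral equation with a = b = 0
  have he := toIntegralEq hK w hw hODE
  rw [hw0, hder0] at he
  have he0 : ∀ t : ℝ, (fun _ : ℝ => (0:ℝ)) t = 0 + 0 * t
      + ((∫ s in (0:ℝ)..t, s * (K s * (fun _ : ℝ => (0:ℝ)) s))
        - t * ∫ s in (0:ℝ)..t, K s * (fun _ : ℝ => (0:ℝ)) s) := by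
    intro t; simp
  have := intEq_unique hK 0 0 w (fun _ => 0) hw.continuous continuous_const he he0
  intro t
  exact congrFun this t

end JacobiAux

/-- **Existence and uniqueness of the Jacobi field vanishing at a prescribed time.**
Let `K : ℝ → ℝ` be continuous with `K t ≤ 0` for all `t`, and let `T ≠ 0`. Then there is a
unique `C²` function `J_T : ℝ → ℝ` with `J_T'' t + K t * J_T t = 0` for all `t`, `J_T 0 = 1`
and `J_T T = 0`. -/
theorem jacobi_field_vanishing_at_T_exists_unique
    (K : ℝ → ℝ) (hKcont : Continuous K) (hKneg : ∀ t : ℝ, K t ≤ 0)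
    (T : ℝ) (hT : T ≠ 0) :
    ∃! J : ℝ → ℝ, ContDiff ℝ 2 J ∧
      (∀ t : ℝ, deriv (deriv J) t + K t * J t = 0) ∧ J 0 = 1 ∧ J T = 0 := by
  have hu := regular hKcont 1 0 (Jsol K 1 0) (Jsol_cont hKcont 1 0) (Jsol_eq hKcont 1 0)
  have hv := regular hKcont 0 1 (Jsol K 0 1) (Jsol_cont hKcont 0 1) (Jsol_eq hKcont 0 1)
  set u : ℝ → ℝ := Jsol K 1 0 with hudef
  set v : ℝ → ℝ := Jsol K 0 1 with hvdef
  have huc : Continuous u := Jsol_cont hKcont 1 0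
  have hvc : Continuous v := Jsol_cont hKcont 0 1
  -- v T ≠ 0 (no conjugate points)
  have hvT : v T ≠ 0 := by
    intro h0
    have hz := bvp_zero_global hKcont hKneg v hv.1 hv.2.2.1 hT hv.2.2.2.1 h0
    have hveq : v = fun _ => (0:ℝ) := funext hz
    have : deriv v 0 = 0 := by rw [hveq]; simp
    rw [hv.2.2.2.2] at this
    norm_num at this
  set c : ℝ := -u T / v T with hcdef
  set J : ℝ → ℝ := fun t => u t + c * v t with hJdef
  have hJc : Continuous J := huc.add (continuous_const.mul hvc)
  have hJeq : ∀ t, J t = 1 + c * t + ((∫ s in (0:ℝ)..t, s * (K s * J s))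
      - t * ∫ s in (0:ℝ)..t, K s * J s) := by
    intro t
    have hI1 : (∫ s in (0:ℝ)..t, K s * J s)
        = (∫ s in (0:ℝ)..t, K s * u s) + c * ∫ s in (0:ℝ)..t, K s * v s := by
      rw [← intervalIntegral.integral_const_mul,
        ← intervalIntegral.integral_add (f := fun s => K s * u s) (g := fun s => c * (K s * v s)) ((hKcont.mul huc).intervalIntegrable 0 t)
          ((continuous_const.mul (hKcont.mul hvc)).intervalIntegrable 0 t)]
      congr 1; ext s; simp only [hJdef]; ring
    have hI2 : (∫ s in (0:ℝ)..t, s * (K s * J s))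
        = (∫ s in (0:ℝ)..t, s * (K s * u s)) + c * ∫ s in (0:ℝ)..t, s * (K s * v s) := by
      rw [← intervalIntegral.integral_const_mul,
        ← intervalIntegral.integral_add (f := fun s => s * (K s * u s)) (g := fun s => c * (s * (K s * v s)))
          ((continuous_id'.mul (hKcont.mul huc)).intervalIntegrable 0 t)
          ((continuous_const.mul (continuous_id'.mul (hKcont.mul hvc))).intervalIntegrable 0 t)]
      congr 1; ext s; simp only [hJdef]; ring
    have e1 := Jsol_eq hKcont 1 0 t
    have e2 := Jsol_eq hKcont 0 1 t
    rw [← hudef] at e1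
    rw [← hvdef] at e2
    rw [hI1, hI2]
    show u t + c * v t = _
    rw [e1, e2]
    ring
  have hreg := regular hKcont 1 c J hJc hJeq
  have hJT : J T = 0 := by
    show u T + c * v T = 0
    rw [hcdef]
    field_simp
    ring
  refine ⟨J, ⟨hreg.1, hreg.2.2.1, hreg.2.2.2.1, hJT⟩, ?_⟩
  rintro J₂ ⟨h₂sm, h₂ode, h₂0, h₂T⟩
  set w : ℝ → ℝ := fun t => J₂ t - J t with hwdef
  have hwsm : ContDiff ℝ 2 w := h₂sm.sub hreg.1
  have hdJ₂ : Differentiable ℝ J₂ := h₂sm.differentiable (by norm_num)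
  have hdJ : Differentiable ℝ J := hreg.1.differentiable (by norm_num)
  have hdw : deriv w = fun t => deriv J₂ t - deriv J t :=
    funext fun t => deriv_sub (hdJ₂ t) (hdJ t)
  have hODEw : ∀ t, deriv (deriv w) t + K t * w t = 0 := by
    intro t
    rw [hdw, deriv_fun_sub ((deriv_differentiable_of_contDiff2 h₂sm) t)
      ((deriv_differentiable_of_contDiff2 hreg.1) t)]
    have g1 := h₂ode t
    have g2 := hreg.2.2.1 t
    simp only [hwdef]
    ring_nf
    ring_nf at g1 g2
    linarith
  have hz := bvp_zero_global hKcont hKneg w hwsm hODEw hT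
    (by simp only [hwdef]; rw [h₂0, hreg.2.2.2.1]; ring)
    (by simp only [hwdef]; rw [h₂T, hJT]; ring)
  funext t
  have := hz t
  simp only [hwdef] at this
  linarith
end

section
/- Hopf's lemma (existence of stable and unstable Jacobi fields): let K₀ ≥ 0 and let K : ℝ → ℝ be continuous with −K₀ ≤ K(t) ≤ 0 for all t. For each nonzero T ∈ ℝ let J_T : ℝ → ℝ denote the unique solution of J_T'' + K·J_T = 0 with J_T(0) = 1 and J_T(T) = 0. Then there exist functions J^s : ℝ → ℝ and J^u : ℝ → ℝ such that for every t ∈ ℝ, J_T(t) → J^s(t) as T → +∞ and J_T(t) → J^u(t) as T → −∞. -/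
open Set Filter

/-- Uniqueness of solutions of the Jacobi equation, viewed as a first-order linear system. -/
lemma jacobi_unique (K₀ : ℝ) (hK₀ : 0 ≤ K₀) (K : ℝ → ℝ)
    (hKb : ∀ t, -K₀ ≤ K t ∧ K t ≤ 0)
    (f f' g g' : ℝ → ℝ)
    (hf : ∀ t, HasDerivAt f (f' t) t) (hf' : ∀ t, HasDerivAt f' (-(K t) * f t) t)
    (hg : ∀ t, HasDerivAt g (g' t) t) (hg' : ∀ t, HasDerivAt g' (-(K t) * g t) t)
    (t₀ : ℝ) (h1 : f t₀ = g t₀) (h2 : f' t₀ = g' t₀) : ∀ t, f t = g t ∧ f' t = g' t := by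
  set v : ℝ → ℝ × ℝ → ℝ × ℝ := fun t p => (p.2, -(K t) * p.1) with hv
  set C : NNReal := ⟨max 1 K₀, le_trans zero_le_one (le_max_left _ _)⟩ with hC
  have hlip : ∀ t, LipschitzWith C (v t) := by
    intro t
    apply LipschitzWith.of_dist_le_mul
    intro p q
    have hCv : (C : ℝ) = max 1 K₀ := rfl
    rw [Prod.dist_eq, Prod.dist_eq]
    have hK : |K t| ≤ K₀ := by
      rcases hKb t with ⟨h1, h2⟩
      rw [abs_le]; constructor <;> linarith
    apply max_le
    · calc dist p.2 q.2 ≤ max (dist p.1 q.1) (dist p.2 q.2) := le_max_right _ _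
        _ ≤ (C : ℝ) * max (dist p.1 q.1) (dist p.2 q.2) := by
            nlinarith [le_max_left (1:ℝ) K₀,
              dist_nonneg.trans (le_max_right (dist p.1 q.1) (dist p.2 q.2)),
              dist_nonneg (x := p.2) (y := q.2)]
    · have : dist (-(K t) * p.1) (-(K t) * q.1) = |K t| * dist p.1 q.1 := by
        rw [Real.dist_eq, Real.dist_eq, ← mul_sub, abs_mul, abs_neg]
      rw [this]
      calc |K t| * dist p.1 q.1 ≤ K₀ * max (dist p.1 q.1) (dist p.2 q.2) := by
            apply mul_le_mul hK (le_max_left _ _) dist_nonneg hK₀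
        _ ≤ (C : ℝ) * max (dist p.1 q.1) (dist p.2 q.2) := by
            apply mul_le_mul_of_nonneg_right (le_max_right _ _)
            exact dist_nonneg.trans (le_max_right _ _)
  intro t
  set F : ℝ → ℝ × ℝ := fun s => (f s, f' s) with hF
  set G : ℝ → ℝ × ℝ := fun s => (g s, g' s) with hG
  have hFd : ∀ s, HasDerivAt F (v s (F s)) s := fun s => (hf s).prodMk (hf' s)
  have hGd : ∀ s, HasDerivAt G (v s (G s)) s := fun s => (hg s).prodMk (hg' s)
  have key : F t = G t := by
    have hmem : t₀ ∈ Ioo (min t t₀ - 1) (max t t₀ + 1) :=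
      ⟨by have := min_le_right t t₀; linarith, by have := le_max_right t t₀; linarith⟩
    have := ODE_solution_unique_of_mem_Icc (s := fun _ => (univ : Set (ℝ × ℝ)))
      (fun s _ => (hlip s).lipschitzOnWith) hmem
      (fun s _ => (hFd s).continuousAt.continuousWithinAt)
      (fun s _ => hFd s) (fun _ _ => trivial)
      (fun s _ => (hGd s).continuousAt.continuousWithinAt)
      (fun s _ => hGd s) (fun _ _ => trivial)
      (by simp [hF, hG, h1, h2])
    exact this ⟨by have := min_le_left t t₀; linarith, by have := le_max_left t t₀; linarith⟩
  exact ⟨congrArg Prod.fst key, congrArg Prod.snd key⟩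

/-- A nontrivial solution of the Jacobi equation with `K ≤ 0` cannot have two zeros. -/
lemma jacobi_two_zeros (K₀ : ℝ) (hK₀ : 0 ≤ K₀) (K : ℝ → ℝ)
    (hKb : ∀ t, -K₀ ≤ K t ∧ K t ≤ 0)
    (f f' : ℝ → ℝ)
    (hf : ∀ t, HasDerivAt f (f' t) t) (hf' : ∀ t, HasDerivAt f' (-(K t) * f t) t)
    (a b : ℝ) (hab : a < b) (ha : f a = 0) (hb : f b = 0) : ∀ t, f t = 0 := by
  set h : ℝ → ℝ := fun t => f t * f' t with hh
  have hd : ∀ t, HasDerivAt h (f' t * f' t + f t * (-(K t) * f t)) t :=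
    fun t => (hf t).mul (hf' t)
  have hmono : Monotone h := by
    apply monotone_of_deriv_nonneg (fun t => (hd t).differentiableAt)
    intro t
    rw [(hd t).deriv]
    have h2 := (hKb t).2
    nlinarith [sq_nonneg (f t), sq_nonneg (f' t)]
  have hzero : ∀ t ∈ Icc a b, h t = 0 := by
    intro t ht
    have h1 : h a ≤ h t := hmono ht.1
    have h2 : h t ≤ h b := hmono ht.2
    have hha : h a = 0 := by simp [hh, ha]
    have hhb : h b = 0 := by simp [hh, hb]
    linarith
  have hsq : ∀ t ∈ Icc a b, f t = 0 := by
    have hg : ∀ x ∈ Icc a b, f x * f x = f a * f a := by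
      apply constant_of_has_deriv_right_zero
      · exact fun x _ => ((hf x).mul (hf x)).continuousAt.continuousWithinAt
      · intro x hx
        have hD : HasDerivAt (fun t => f t * f t) (f' x * f x + f x * f' x) x := (hf x).mul (hf x)
        have hz : f' x * f x + f x * f' x = 0 := by
          have := hzero x ⟨hx.1, hx.2.le⟩
          simp only [hh] at this
          nlinarith
        rw [hz] at hD
        exact hD.hasDerivWithinAt
    intro t ht
    have := hg t ht
    rw [ha, mul_zero] at this
    exact mul_self_eq_zero.mp this
  set m : ℝ := (a + b) / 2 with hm
  have hmmem : m ∈ Ioo a b := ⟨by simp only [hm]; linarith, by simp only [hm]; linarith⟩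
  have hev : f =ᶠ[nhds m] (fun _ => (0 : ℝ)) := by
    filter_upwards [Ioo_mem_nhds hmmem.1 hmmem.2] with x hx
    exact hsq x ⟨hx.1.le, hx.2.le⟩
  have hfm : f m = 0 := hsq m ⟨hmmem.1.le, hmmem.2.le⟩
  have hf'm : f' m = 0 := by
    have h1 : HasDerivAt (fun _ => (0 : ℝ)) (f' m) m := (hf m).congr_of_eventuallyEq hev.symm
    have h2 : HasDerivAt (fun _ => (0 : ℝ)) 0 m := hasDerivAt_const m 0
    exact h1.unique h2
  intro t
  exact (jacobi_unique K₀ hK₀ K hKb f f' (fun _ => 0) (fun _ => 0) hf hf'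
    (fun t => hasDerivAt_const t 0) (fun t => by simpa using hasDerivAt_const t (0:ℝ))
    m hfm hf'm t).1

/-- Positivity of a Jacobi field away from its unique zero. -/
lemma jacobi_pos (K₀ : ℝ) (hK₀ : 0 ≤ K₀) (K : ℝ → ℝ)
    (hKb : ∀ t, -K₀ ≤ K t ∧ K t ≤ 0)
    (f f' : ℝ → ℝ)
    (hf : ∀ t, HasDerivAt f (f' t) t) (hf' : ∀ t, HasDerivAt f' (-(K t) * f t) t)
    (h0 : f 0 = 1) (T : ℝ) (hT : f T = 0) (t : ℝ)
    (havoid : ∀ s ∈ uIcc t (0:ℝ), s ≠ T) : 0 < f t := by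
  by_contra hle
  push_neg at hle
  have hcont : ContinuousOn f (uIcc t 0) :=
    fun x _ => (hf x).continuousAt.continuousWithinAt
  have hmem : (0:ℝ) ∈ uIcc (f t) (f 0) := by
    rw [h0, Set.mem_uIcc]
    left; exact ⟨hle, zero_le_one⟩
  obtain ⟨s, hs, hfs⟩ := intermediate_value_uIcc hcont hmem
  have hsT : s ≠ T := havoid s hs
  have hall : ∀ x, f x = 0 := by
    rcases lt_or_gt_of_ne hsT with h | h
    · exact jacobi_two_zeros K₀ hK₀ K hKb f f' hf hf' s T h hfs hT
    · exact jacobi_two_zeros K₀ hK₀ K hKb f f' hf hf' T s h hT hfs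
  have := hall 0
  rw [h0] at this
  norm_num at this

lemma slope_sign_right (D : ℝ → ℝ) (d : ℝ) (hD : HasDerivAt D d 0) (h0 : D 0 = 0)
    (hpos : ∀ t > (0:ℝ), 0 ≤ D t) : 0 ≤ d := by
  have h1 : Tendsto (slope D 0) (nhdsWithin 0 {(0:ℝ)}ᶜ) (nhds d) :=
    hasDerivAt_iff_tendsto_slope.mp hD
  have h2 : Tendsto (slope D 0) (nhdsWithin 0 (Ioi 0)) (nhds d) :=
    h1.mono_left (nhdsWithin_mono 0 (fun x hx => ne_of_gt hx))
  refine ge_of_tendsto h2 ?_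
  filter_upwards [self_mem_nhdsWithin] with x hx
  have hx' : (0:ℝ) < x := hx
  rw [slope_def_field, h0, sub_zero, sub_zero]
  exact div_nonneg (hpos x hx') hx'.le

lemma slope_sign_left (D : ℝ → ℝ) (d : ℝ) (hD : HasDerivAt D d 0) (h0 : D 0 = 0)
    (hpos : ∀ t < (0:ℝ), 0 ≤ D t) : d ≤ 0 := by
  have h1 : Tendsto (slope D 0) (nhdsWithin 0 {(0:ℝ)}ᶜ) (nhds d) :=
    hasDerivAt_iff_tendsto_slope.mp hD
  have h2 : Tendsto (slope D 0) (nhdsWithin 0 (Iio 0)) (nhds d) :=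
    h1.mono_left (nhdsWithin_mono 0 (fun x hx => ne_of_lt hx))
  refine le_of_tendsto h2 ?_
  filter_upwards [self_mem_nhdsWithin] with x hx
  have hx' : x < (0:ℝ) := hx
  rw [slope_def_field, h0, sub_zero, sub_zero]
  exact div_nonpos_of_nonneg_of_nonpos (hpos x hx') hx'.le

/-- **Hopf's lemma: existence of the stable and unstable Jacobi fields.**
Let `K₀ ≥ 0` and `K : ℝ → ℝ` be continuous with `-K₀ ≤ K t ≤ 0` for all `t`. For each
`T ≠ 0` let `JT T : ℝ → ℝ` be the unique solution of the Jacobi equation with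
`JT T 0 = 1` and `JT T T = 0`. Then there exist functions `Js Ju : ℝ → ℝ` such that for
every `t`, `JT T t → Js t` as `T → +∞` and `JT T t → Ju t` as `T → −∞`. -/
theorem hopf_stable_unstable_jacobi_fields
    (K₀ : ℝ) (hK₀ : 0 ≤ K₀) (K : ℝ → ℝ) (hKcont : Continuous K)
    (hKbound : ∀ t : ℝ, -K₀ ≤ K t ∧ K t ≤ 0)
    (JT : ℝ → ℝ → ℝ)
    (hJT : ∀ T : ℝ, T ≠ 0 → ContDiff ℝ 2 (JT T) ∧
      (∀ t : ℝ, deriv (deriv (JT T)) t + K t * JT T t = 0) ∧ JT T 0 = 1 ∧ JT T T = 0) :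
    ∃ Js Ju : ℝ → ℝ,
      (∀ t : ℝ, Filter.Tendsto (fun T => JT T t) Filter.atTop (nhds (Js t))) ∧
      (∀ t : ℝ, Filter.Tendsto (fun T => JT T t) Filter.atBot (nhds (Ju t))) := by
  -- basic differentiability facts
  have hd1 : ∀ T, T ≠ 0 → ∀ t, HasDerivAt (JT T) (deriv (JT T) t) t := by
    intro T hT t
    exact (((hJT T hT).1.differentiable (by norm_num)) t).hasDerivAt
  have hd2 : ∀ T, T ≠ 0 → ∀ t, HasDerivAt (deriv (JT T)) (-(K t) * JT T t) t := by
    intro T hT t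
    obtain ⟨hcd, hode, -, -⟩ := hJT T hT
    have h2 : ContDiff ℝ ((1 : ℕ) + 1) (JT T) := by norm_num; exact hcd
    have hdd : Differentiable ℝ (deriv (JT T)) :=
      ((contDiff_succ_iff_deriv (n := 1)).mp (by exact_mod_cast h2)).2.2.differentiable (by norm_num)
    have h3 := (hdd t).hasDerivAt
    have h4 : deriv (deriv (JT T)) t = -(K t) * JT T t := by linarith [hode t]
    rw [h4] at h3; exact h3
  set c : ℝ → ℝ := fun T => deriv (JT T) 0 with hcdef
  -- positivity on the component of the complement of the zero containing 0
  have hposP : ∀ T t : ℝ, 0 < T → t < T → 0 < JT T t := by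
    intro T t h1 h2
    have hT : T ≠ 0 := ne_of_gt h1
    apply jacobi_pos K₀ hK₀ K hKbound (JT T) (deriv (JT T)) (hd1 T hT) (hd2 T hT)
      (hJT T hT).2.2.1 T (hJT T hT).2.2.2 t
    intro s hs
    rw [Set.mem_uIcc] at hs
    rcases hs with ⟨_, h⟩ | ⟨_, h⟩ <;> exact ne_of_lt (lt_of_le_of_lt h (by linarith))
  have hposN : ∀ T t : ℝ, T < 0 → T < t → 0 < JT T t := by
    intro T t h1 h2
    have hT : T ≠ 0 := ne_of_lt h1
    apply jacobi_pos K₀ hK₀ K hKbound (JT T) (deriv (JT T)) (hd1 T hT) (hd2 T hT)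
      (hJT T hT).2.2.1 T (hJT T hT).2.2.2 t
    intro s hs
    rw [Set.mem_uIcc] at hs
    rcases hs with ⟨h, _⟩ | ⟨h, _⟩ <;> exact (ne_of_lt (lt_of_lt_of_le (by linarith) h)).symm
  -- difference of two solutions: derivative facts
  have hDd1 : ∀ T T' : ℝ, T ≠ 0 → T' ≠ 0 → ∀ t,
      HasDerivAt (fun s => JT T' s - JT T s) (deriv (JT T') t - deriv (JT T) t) t :=
    fun T T' hT hT' t => (hd1 T' hT' t).sub (hd1 T hT t)
  have hDd2 : ∀ T T' : ℝ, T ≠ 0 → T' ≠ 0 → ∀ t,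
      HasDerivAt (fun s => deriv (JT T') s - deriv (JT T) s)
        (-(K t) * (JT T' t - JT T t)) t := by
    intro T T' hT hT' t
    have : HasDerivAt (fun s => deriv (JT T') s - deriv (JT T) s)
        (-(K t) * JT T' t - -(K t) * JT T t) t := (hd2 T' hT' t).sub (hd2 T hT t)
    convert this using 1
    ring
  have hD0 : ∀ T T' : ℝ, T ≠ 0 → T' ≠ 0 → JT T' 0 - JT T 0 = 0 := by
    intro T T' hT hT'
    rw [(hJT T hT).2.2.1, (hJT T' hT').2.2.1, sub_self]
  -- if the difference is positive somewhere on the right, it is nonnegative on the right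
  have hDpos : ∀ T T' : ℝ, T ≠ 0 → T' ≠ 0 → ∀ w : ℝ, 0 < w → 0 < JT T' w - JT T w →
      ∀ s : ℝ, 0 < s → 0 ≤ JT T' s - JT T s := by
    intro T T' hT hT' w hw hDw s hs
    by_contra hneg
    push_neg at hneg
    set D : ℝ → ℝ := fun s => JT T' s - JT T s with hD
    have hcont : ContinuousOn D (uIcc s w) :=
      fun x _ => (hDd1 T T' hT hT' x).continuousAt.continuousWithinAt
    have hmem : (0:ℝ) ∈ uIcc (D s) (D w) := by
      rw [Set.mem_uIcc]; left; exact ⟨hneg.le, hDw.le⟩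
    obtain ⟨z, hz, hDz⟩ := intermediate_value_uIcc hcont hmem
    have hz0 : 0 < z := by
      rw [Set.mem_uIcc] at hz
      rcases hz with ⟨h, _⟩ | ⟨h, _⟩ <;> linarith
    have hall := jacobi_two_zeros K₀ hK₀ K hKbound D
      (fun x => deriv (JT T') x - deriv (JT T) x)
      (hDd1 T T' hT hT') (hDd2 T T' hT hT') 0 z hz0 (hD0 T T' hT hT') hDz
    have hw0 : JT T' w - JT T w = 0 := hall w
    linarith
  have hDposN : ∀ T T' : ℝ, T ≠ 0 → T' ≠ 0 → ∀ w : ℝ, w < 0 → 0 < JT T' w - JT T w →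
      ∀ s : ℝ, s < 0 → 0 ≤ JT T' s - JT T s := by
    intro T T' hT hT' w hw hDw s hs
    by_contra hneg
    push_neg at hneg
    set D : ℝ → ℝ := fun s => JT T' s - JT T s with hD
    have hcont : ContinuousOn D (uIcc s w) :=
      fun x _ => (hDd1 T T' hT hT' x).continuousAt.continuousWithinAt
    have hmem : (0:ℝ) ∈ uIcc (D s) (D w) := by
      rw [Set.mem_uIcc]; left; exact ⟨hneg.le, hDw.le⟩
    obtain ⟨z, hz, hDz⟩ := intermediate_value_uIcc hcont hmem
    have hz0 : z < 0 := by
      rw [Set.mem_uIcc] at hz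
      rcases hz with ⟨_, h⟩ | ⟨_, h⟩ <;> linarith
    have hall := jacobi_two_zeros K₀ hK₀ K hKbound D
      (fun x => deriv (JT T') x - deriv (JT T) x)
      (hDd1 T T' hT hT') (hDd2 T T' hT hT') z 0 hz0 hDz (hD0 T T' hT hT')
    have hw0 : JT T' w - JT T w = 0 := hall w
    linarith
  -- monotonicity of c on the positives
  have hmonoP : ∀ T T' : ℝ, 0 < T → T ≤ T' → c T ≤ c T' := by
    intro T T' h1 h2
    rcases eq_or_lt_of_le h2 with rfl | h2
    · exact le_refl _
    · have hT : T ≠ 0 := ne_of_gt h1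
      have hT' : T' ≠ 0 := ne_of_gt (h1.trans h2)
      have hw : 0 < JT T' T - JT T T := by
        rw [(hJT T hT).2.2.2, sub_zero]
        exact hposP T' T (h1.trans h2) h2
      have hge := hDpos T T' hT hT' T h1 hw
      have hder : HasDerivAt (fun s => JT T' s - JT T s) (c T' - c T) 0 := hDd1 T T' hT hT' 0
      have := slope_sign_right _ _ hder (hD0 T T' hT hT') (fun t ht => hge t ht)
      linarith
  -- c on the positives is bounded above by c on the negatives
  have hbdd : ∀ S T : ℝ, S < 0 → 0 < T → c T ≤ c S := by
    intro S T hS hT0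
    have hT : T ≠ 0 := ne_of_gt hT0
    have hS' : S ≠ 0 := ne_of_lt hS
    have hw : 0 < JT S T - JT T T := by
      rw [(hJT T hT).2.2.2, sub_zero]
      exact hposN S T hS (hS.trans hT0)
    have hge := hDpos T S hT hS' T hT0 hw
    have hder : HasDerivAt (fun s => JT S s - JT T s) (c S - c T) 0 := hDd1 T S hT hS' 0
    have := slope_sign_right _ _ hder (hD0 T S hT hS') (fun t ht => hge t ht)
    linarith
  -- monotonicity of c on the negatives
  have hmonoN : ∀ S S' : ℝ, S ≤ S' → S' < 0 → c S ≤ c S' := by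
    intro S S' h2 h1
    rcases eq_or_lt_of_le h2 with rfl | h2
    · exact le_refl _
    · have hS : S ≠ 0 := ne_of_lt (h2.trans h1)
      have hS' : S' ≠ 0 := ne_of_lt h1
      have hw : 0 < JT S S' - JT S' S' := by
        rw [(hJT S' hS').2.2.2, sub_zero]
        exact hposN S S' (h2.trans h1) h2
      have hge := hDposN S' S hS' hS S' h1 hw
      have hder : HasDerivAt (fun s => JT S s - JT S' s) (c S - c S') 0 := hDd1 S' S hS' hS 0
      have := slope_sign_left _ _ hder (hD0 S' S hS' hS) (fun t ht => hge t ht)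
      linarith
  -- strict separation
  have hstrict : c 1 < c (-1) := by
    rcases lt_or_eq_of_le (hbdd (-1) 1 (by norm_num) one_pos) with h | h
    · exact h
    · exfalso
      have h1 : (1:ℝ) ≠ 0 := one_ne_zero
      have h2 : (-1:ℝ) ≠ 0 := by norm_num
      have heq := jacobi_unique K₀ hK₀ K hKbound (JT 1) (deriv (JT 1)) (JT (-1))
        (deriv (JT (-1))) (hd1 1 h1) (hd2 1 h1) (hd1 (-1) h2) (hd2 (-1) h2) 0
        (by rw [(hJT 1 h1).2.2.1, (hJT (-1) h2).2.2.1]) h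
      have hz1 : JT 1 (-1) = 0 := by
        rw [(heq (-1)).1]; exact (hJT (-1) h2).2.2.2
      have hall := jacobi_two_zeros K₀ hK₀ K hKbound (JT 1) (deriv (JT 1))
        (hd1 1 h1) (hd2 1 h1) (-1) 1 (by norm_num) hz1 (hJT 1 h1).2.2.2
      have := hall 0
      rw [(hJT 1 h1).2.2.1] at this
      norm_num at this
  set β : ℝ := c (-1) - c 1 with hβdef
  have hβ : 0 < β := by simp only [hβdef]; linarith
  -- representation of every solution in terms of JT 1 and JT (-1)
  have hrep : ∀ T : ℝ, T ≠ 0 → ∀ t : ℝ,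
      JT T t = (1 - (c T - c 1) / β) * JT 1 t + ((c T - c 1) / β) * JT (-1) t := by
    intro T hT t
    have h1 : (1:ℝ) ≠ 0 := one_ne_zero
    have h2 : (-1:ℝ) ≠ 0 := by norm_num
    set a₁ : ℝ := 1 - (c T - c 1) / β with ha₁
    set a₂ : ℝ := (c T - c 1) / β with ha₂
    have hg : ∀ s, HasDerivAt (fun x => a₁ * JT 1 x + a₂ * JT (-1) x)
        (a₁ * deriv (JT 1) s + a₂ * deriv (JT (-1)) s) s :=
      fun s => ((hd1 1 h1 s).const_mul a₁).add ((hd1 (-1) h2 s).const_mul a₂)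
    have hg' : ∀ s, HasDerivAt (fun x => a₁ * deriv (JT 1) x + a₂ * deriv (JT (-1)) x)
        (-(K s) * (a₁ * JT 1 s + a₂ * JT (-1) s)) s := by
      intro s
      have : HasDerivAt (fun x => a₁ * deriv (JT 1) x + a₂ * deriv (JT (-1)) x)
          (a₁ * (-(K s) * JT 1 s) + a₂ * (-(K s) * JT (-1) s)) s :=
        ((hd2 1 h1 s).const_mul a₁).add ((hd2 (-1) h2 s).const_mul a₂)
      convert this using 1
      ring
    have hv0 : JT T 0 = a₁ * JT 1 0 + a₂ * JT (-1) 0 := by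
      rw [(hJT T hT).2.2.1, (hJT 1 h1).2.2.1, (hJT (-1) h2).2.2.1]
      simp only [ha₁, ha₂]; ring
    have hv0' : deriv (JT T) 0 = a₁ * deriv (JT 1) 0 + a₂ * deriv (JT (-1)) 0 := by
      have hq : a₂ * β = c T - c 1 := div_mul_cancel₀ _ (ne_of_gt hβ)
      simp only [ha₁, hβdef] at hq ⊢
      have : c T = deriv (JT T) 0 := rfl
      nlinarith [hq]
    exact (jacobi_unique K₀ hK₀ K hKbound (JT T) (deriv (JT T))
      (fun x => a₁ * JT 1 x + a₂ * JT (-1) x)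
      (fun x => a₁ * deriv (JT 1) x + a₂ * deriv (JT (-1)) x)
      (hd1 T hT) (hd2 T hT) hg hg' 0 hv0 hv0' t).1
  -- existence of the limits of c at ±∞
  have hLs : ∃ L : ℝ, Tendsto c atTop (nhds L) := by
    set u : ℝ → ℝ := fun T => c (max T 1) with hu
    have humono : Monotone u := by
      intro x y hxy
      exact hmonoP _ _ (lt_of_lt_of_le one_pos (le_max_right x 1)) (max_le_max hxy le_rfl)
    have hubdd : BddAbove (Set.range u) := by
      refine ⟨c (-1), ?_⟩
      rintro _ ⟨T, rfl⟩
      exact hbdd (-1) _ (by norm_num) (lt_of_lt_of_le one_pos (le_max_right T 1))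
    refine ⟨⨆ T, u T, ?_⟩
    have := tendsto_atTop_ciSup humono hubdd
    apply this.congr'
    filter_upwards [eventually_ge_atTop (1:ℝ)] with T hT
    simp only [hu, max_eq_left hT]
  have hLu : ∃ L : ℝ, Tendsto c atBot (nhds L) := by
    set u : ℝ → ℝ := fun T => c (min T (-1)) with hu
    have humono : Monotone u := by
      intro x y hxy
      exact hmonoN _ _ (min_le_min hxy le_rfl)
        (lt_of_le_of_lt (min_le_right y (-1)) (by norm_num))
    have hubdd : BddBelow (Set.range u) := by
      refine ⟨c 1, ?_⟩
      rintro _ ⟨T, rfl⟩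
      exact hbdd _ 1 (lt_of_le_of_lt (min_le_right T (-1)) (by norm_num)) one_pos
    refine ⟨⨅ T, u T, ?_⟩
    have := tendsto_atBot_ciInf humono hubdd
    apply this.congr'
    filter_upwards [eventually_le_atBot (-1:ℝ)] with T hT
    simp only [hu, min_eq_left hT]
  obtain ⟨Ls, hLs⟩ := hLs
  obtain ⟨Lu, hLu⟩ := hLu
  refine ⟨fun t => (1 - (Ls - c 1) / β) * JT 1 t + ((Ls - c 1) / β) * JT (-1) t,
    fun t => (1 - (Lu - c 1) / β) * JT 1 t + ((Lu - c 1) / β) * JT (-1) t, ?_, ?_⟩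
  · intro t
    have hq : Tendsto (fun T => (c T - c 1) / β) atTop (nhds ((Ls - c 1) / β)) :=
      (hLs.sub_const (c 1)).div_const β
    have h1 : Tendsto (fun T => (1 - (c T - c 1) / β) * JT 1 t + ((c T - c 1) / β) * JT (-1) t)
        atTop (nhds ((1 - (Ls - c 1) / β) * JT 1 t + ((Ls - c 1) / β) * JT (-1) t)) :=
      (((tendsto_const_nhds.sub hq).mul_const _).add (hq.mul_const _))
    apply h1.congr'
    filter_upwards [eventually_ge_atTop (1:ℝ)] with T hT
    exact (hrep T (ne_of_gt (lt_of_lt_of_le one_pos hT)) t).symm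
  · intro t
    have hq : Tendsto (fun T => (c T - c 1) / β) atBot (nhds ((Lu - c 1) / β)) :=
      (hLu.sub_const (c 1)).div_const β
    have h1 : Tendsto (fun T => (1 - (c T - c 1) / β) * JT 1 t + ((c T - c 1) / β) * JT (-1) t)
        atBot (nhds ((1 - (Lu - c 1) / β) * JT 1 t + ((Lu - c 1) / β) * JT (-1) t)) :=
      (((tendsto_const_nhds.sub hq).mul_const _).add (hq.mul_const _))
    apply h1.congr'
    filter_upwards [eventually_le_atBot (-1:ℝ)] with T hT
    exact (hrep T (ne_of_lt (lt_of_le_of_lt hT (by norm_num))) t).symm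
end
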